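/- arXiv:1910.09949 — 11 statements merged into one kernel-verified Lean document; each statement's English description precedes it below -/
import Mathlib

section
/- Let (Ω, 𝔽, P) be a probability space, R > 0, d > 0, t ≥ d, and n̂ = ⌈R(t-d)⌉. Let D : ℕ → Ω → ℝ be a sequence of random variables such that almost surely the map n ↦ D(n)(ω) is nondecreasing. Then P( ∀ n, ¬(D(n) ≤ t ∧ t - n/R ≤ d) ) = P( D(n̂) > t ). In particular, the probability that the age of information at time t exceeds d equals the probability that the tagged packet n̂ has not departed by time t. -/
open MeasureTheory

/-- Under FCFS (almost surely nondecreasing departure times), the probability that no packet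
with arrival time in `[t-d, t]` has departed by time `t` (i.e. the AoI at `t` exceeds `d`)
equals the probability that the tagged packet `n̂ = ⌈R(t-d)⌉` has not departed by `t`. -/
theorem stmt5 {Ω : Type*} [MeasurableSpace Ω] (μ : Measure Ω) [IsProbabilityMeasure μ]
    (R d t : ℝ) (hR : 0 < R) (hd : 0 < d) (ht : d ≤ t)
    (D : ℕ → Ω → ℝ) (hmeas : ∀ n, Measurable (D n))
    (hmono : ∀ᵐ ω ∂μ, Monotone fun n => D n ω) :
    μ {ω | ∀ n : ℕ, ¬ (D n ω ≤ t ∧ t - (n : ℝ) / R ≤ d)} =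
      μ {ω | t < D ⌈R * (t - d)⌉₊ ω} := by
  apply measure_congr
  filter_upwards [hmono] with ω hω
  have h0 : (0:ℝ) ≤ R * (t - d) := mul_nonneg hR.le (by linarith)
  have hceil : R * (t - d) ≤ (⌈R * (t - d)⌉₊ : ℝ) := Nat.le_ceil _
  have key : (∀ n : ℕ, ¬ (D n ω ≤ t ∧ t - (n : ℝ) / R ≤ d)) ↔ t < D ⌈R * (t - d)⌉₊ ω := by
    constructor
    · intro h
      have := h ⌈R * (t - d)⌉₊
      push_neg at this
      apply lt_of_not_ge
      intro hle
      have h2 : t - (⌈R * (t - d)⌉₊ : ℝ) / R ≤ d := by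
        have : t - d ≤ (⌈R * (t - d)⌉₊ : ℝ) / R := (le_div_iff₀ hR).mpr (by linarith)
        linarith
      exact absurd h2 (not_le.mpr (this hle))
    · intro h n hn
      obtain ⟨h1, h2⟩ := hn
      have hn' : R * (t - d) ≤ (n : ℝ) := by
        rw [sub_le_iff_le_add, ← sub_le_iff_le_add'] at h2
        have : t - d ≤ (n:ℝ)/R := by linarith
        calc R * (t - d) ≤ R * ((n:ℝ)/R) := mul_le_mul_of_nonneg_left this hR.le
            _ = (n:ℝ) := by field_simp
      have : ⌈R * (t - d)⌉₊ ≤ n := Nat.ceil_le.mpr hn'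
      exact absurd h1 (not_le.mpr (lt_of_lt_of_le h (hω this)))
  exact propext key
end

section
/- Let (X^i)_{i≥0} be i.i.d. nonnegative real random variables, let R > 0, d > 0 and t ≥ d, set n̂ = ⌈R(t-d)⌉, and define the departure time D(n̂) = max_{0 ≤ v ≤ n̂} ( (n̂ - v)/R + Σ_{i=0}^{v} X^{n̂ - i} ). Then P( D(n̂) > t ) ≤ Σ_{v=0}^{n̂} P( Σ_{i=0}^{v} X^i > d + (v-1)/R ). -/
open MeasureTheory ProbabilityTheory

lemma identDistrib_add {Ω : Type*} [MeasurableSpace Ω] {μ : Measure Ω} [IsProbabilityMeasure μ]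
    {X Y X' Y' : Ω → ℝ} (hX : Measurable X) (hY : Measurable Y) (hX' : Measurable X')
    (hY' : Measurable Y') (hXY : IndepFun X Y μ) (hXY' : IndepFun X' Y' μ)
    (h1 : IdentDistrib X X' μ μ) (h2 : IdentDistrib Y Y' μ μ) :
    IdentDistrib (fun ω => X ω + Y ω) (fun ω => X' ω + Y' ω) μ μ := by
  have hp : IdentDistrib (fun ω => (X ω, Y ω)) (fun ω => (X' ω, Y' ω)) μ μ := by
    refine ⟨(hX.prodMk hY).aemeasurable, (hX'.prodMk hY').aemeasurable, ?_⟩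
    rw [(indepFun_iff_map_prod_eq_prod_map_map hX.aemeasurable hY.aemeasurable).1 hXY,
      (indepFun_iff_map_prod_eq_prod_map_map hX'.aemeasurable hY'.aemeasurable).1 hXY',
      h1.map_eq, h2.map_eq]
  exact hp.comp (measurable_fst.add measurable_snd)

lemma sum_identDistrib_shift {Ω : Type*} [MeasurableSpace Ω] (μ : Measure Ω)
    [IsProbabilityMeasure μ] (X : ℕ → Ω → ℝ) (hmeas : ∀ i, Measurable (X i))
    (hindep : iIndepFun X μ)
    (hident : ∀ i, μ.map (X i) = μ.map (X 0)) (n : ℕ) :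
    ∀ v, v ≤ n → IdentDistrib (fun ω => ∑ i ∈ Finset.range (v + 1), X (n - i) ω)
      (fun ω => ∑ i ∈ Finset.range (v + 1), X i ω) μ μ := by
  intro v
  induction v with
  | zero =>
    intro _
    simpa using ⟨(hmeas n).aemeasurable, (hmeas 0).aemeasurable, hident n⟩
  | succ v ih =>
    intro hv1
    have hv : v ≤ n := by omega
    set s : Finset ℕ := (Finset.range (v + 1)).image (fun i => n - i) with hs
    have hinj : ∀ i ∈ Finset.range (v+1), ∀ j ∈ Finset.range (v+1),
        n - i = n - j → i = j := by
      intro i hi j hj h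
      simp only [Finset.mem_range] at hi hj
      omega
    have hsum : (fun ω => ∑ i ∈ Finset.range (v + 1), X (n - i) ω)
        = fun ω => ∑ j ∈ s, X j ω := by
      funext ω; rw [hs, Finset.sum_image hinj]
    have hnot : n - (v + 1) ∉ s := by
      rw [hs]
      simp only [Finset.mem_image, Finset.mem_range, not_exists]
      intro i hi
      omega
    have hindL : IndepFun (fun ω => ∑ i ∈ Finset.range (v + 1), X (n - i) ω)
        (X (n - (v + 1))) μ := by
      rw [hsum]
      have h := hindep.indepFun_finsetSum_of_notMem hmeas hnot
      have he : (∑ j ∈ s, X j) = fun ω => ∑ j ∈ s, X j ω := by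
        funext ω; simp [Finset.sum_apply]
      rwa [he] at h
    have hindR : IndepFun (fun ω => ∑ i ∈ Finset.range (v + 1), X i ω) (X (v + 1)) μ := by
      have hnot' : v + 1 ∉ Finset.range (v + 1) := by simp
      have h := hindep.indepFun_finsetSum_of_notMem hmeas hnot'
      have he : (∑ j ∈ Finset.range (v+1), X j) = fun ω => ∑ j ∈ Finset.range (v+1), X j ω := by
        funext ω; simp [Finset.sum_apply]
      rwa [he] at h
    have hident2 : IdentDistrib (X (n - (v + 1))) (X (v + 1)) μ μ :=
      ⟨(hmeas _).aemeasurable, (hmeas _).aemeasurable,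
        (hident _).trans (hident _).symm⟩
    have hmeasL : Measurable (fun ω => ∑ i ∈ Finset.range (v + 1), X (n - i) ω) :=
      Finset.measurable_sum _ fun i _ => hmeas _
    have hmeasR : Measurable (fun ω => ∑ i ∈ Finset.range (v + 1), X i ω) :=
      Finset.measurable_sum _ fun i _ => hmeas _
    have := identDistrib_add hmeasL (hmeas _) hmeasR (hmeas _) hindL hindR (ih hv) hident2
    simpa [Finset.sum_range_succ] using this

/-- Reich's (max-plus) equation: departure time of packet `n` from an FCFS queue with
arrival process `A` and service times `X`. -/
noncomputable def depart {Ω : Type*} (A : ℕ → Ω → ℝ) (X : ℕ → Ω → ℝ) (n : ℕ) (ω : Ω) : ℝ :=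
  (Finset.range (n + 1)).sup' ⟨0, Finset.mem_range.mpr (Nat.succ_pos n)⟩
    (fun v => A (n - v) ω + ∑ i ∈ Finset.range (v + 1), X (n - i) ω)

/-- Union-bound upper bound on the violation probability of the departure instant of the tagged
packet `n̂ = ⌈R(t-d)⌉` for a D/G/1 FCFS queue with i.i.d. nonnegative service times. -/
theorem stmt6 {Ω : Type*} [MeasurableSpace Ω] (μ : Measure Ω) [IsProbabilityMeasure μ]
    (X : ℕ → Ω → ℝ) (hmeas : ∀ i, Measurable (X i)) (hnn : ∀ i ω, 0 ≤ X i ω)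
    (hindep : iIndepFun X μ)
    (hident : ∀ i, μ.map (X i) = μ.map (X 0))
    (R d t : ℝ) (hR : 0 < R) (hd : 0 < d) (ht : d ≤ t) :
    μ {ω | t < depart (fun n _ => (n : ℝ) / R) X ⌈R * (t - d)⌉₊ ω} ≤
      ∑ v ∈ Finset.range (⌈R * (t - d)⌉₊ + 1),
        μ {ω | d + ((v : ℝ) - 1) / R < ∑ i ∈ Finset.range (v + 1), X i ω} := by
  set n := ⌈R * (t - d)⌉₊ with hn
  have hnle : (n : ℝ) ≤ R * (t - d) + 1 := by
    have h0 : 0 ≤ R * (t - d) := mul_nonneg hR.le (by linarith)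
    exact (Nat.ceil_lt_add_one h0).le
  have hsub : {ω | t < depart (fun n _ => (n : ℝ) / R) X n ω} ⊆
      ⋃ v ∈ Finset.range (n + 1),
        {ω | t < (↑(n - v) : ℝ) / R + ∑ i ∈ Finset.range (v + 1), X (n - i) ω} := by
    intro ω hω
    rw [Set.mem_setOf_eq, depart] at hω
    obtain ⟨v, hv, hlt⟩ := (Finset.lt_sup'_iff _).1 hω
    exact Set.mem_biUnion hv hlt
  calc μ {ω | t < depart (fun n _ => (n : ℝ) / R) X n ω}
      ≤ μ (⋃ v ∈ Finset.range (n + 1),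
        {ω | t < (↑(n - v) : ℝ) / R + ∑ i ∈ Finset.range (v + 1), X (n - i) ω}) :=
        measure_mono hsub
    _ ≤ ∑ v ∈ Finset.range (n + 1),
        μ {ω | t < (↑(n - v) : ℝ) / R + ∑ i ∈ Finset.range (v + 1), X (n - i) ω} :=
        measure_biUnion_finset_le _ _
    _ ≤ ∑ v ∈ Finset.range (n + 1),
        μ {ω | d + ((v : ℝ) - 1) / R < ∑ i ∈ Finset.range (v + 1), X i ω} := by
      refine Finset.sum_le_sum fun v hv => ?_
      have hvn : v ≤ n := by simpa [Nat.lt_succ_iff] using hv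
      have hcast : (↑(n - v) : ℝ) = (n : ℝ) - v := by
        rw [Nat.cast_sub hvn]
      have hkey : d + ((v : ℝ) - 1) / R ≤ t - (↑(n - v) : ℝ) / R := by
        rw [hcast]
        have h2 : (((v : ℝ) - 1) + ((n : ℝ) - v)) / R ≤ t - d := by
          rw [div_le_iff₀ hR]
          nlinarith
        rw [add_div] at h2
        linarith
      have hsub2 : {ω | t < (↑(n - v) : ℝ) / R + ∑ i ∈ Finset.range (v + 1), X (n - i) ω}
          ⊆ {ω | d + ((v : ℝ) - 1) / R < ∑ i ∈ Finset.range (v + 1), X (n - i) ω} := by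
        intro ω hω
        simp only [Set.mem_setOf_eq] at hω ⊢
        linarith
      refine le_trans (measure_mono hsub2) (le_of_eq ?_)
      exact (sum_identDistrib_shift μ X hmeas hindep hident n v hvn).measure_mem_eq
        (measurableSet_lt measurable_const measurable_id)
end

section
/- Let (X^i)_{i≥0} be i.i.d. nonnegative real random variables, let R > 0, d > 0 and t ≥ d, set n̂ = ⌈R(t-d)⌉, and define D(n̂) = max_{0 ≤ v ≤ n̂} ( (n̂ - v)/R + Σ_{i=0}^{v} X^{n̂ - i} ). Suppose s > 0 is such that M(s) = E[e^{s X^0}] is finite and M(s) < e^{s/R}, and set β(s) = M(s) e^{-s/R}. Then P( D(n̂) > t ) ≤ e^{-s(d - 1/R)} · M(s) / (1 - β(s)). -/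
open MeasureTheory ProbabilityTheory

/-- Chernoff upper bound `Ψ₁(s,d,R) = e^{-s(d-1/R)} M(s)/(1-β(s))` on the violation
probability of the departure instant of the tagged packet `n̂ = ⌈R(t-d)⌉` for a D/G/1 FCFS
queue with i.i.d. nonnegative service times, where `M(s) = E[e^{s X⁰}]` satisfies
`M(s) < e^{s/R}` and `β(s) = M(s) e^{-s/R}`. -/
theorem stmt7 {Ω : Type*} [MeasurableSpace Ω] (μ : Measure Ω) [IsProbabilityMeasure μ]
    (X : ℕ → Ω → ℝ) (hmeas : ∀ i, Measurable (X i)) (hnn : ∀ i ω, 0 ≤ X i ω)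
    (hindep : iIndepFun X μ)
    (hident : ∀ i, μ.map (X i) = μ.map (X 0))
    (R d t s : ℝ) (hR : 0 < R) (hd : 0 < d) (ht : d ≤ t) (hs : 0 < s)
    (hint : Integrable (fun ω => Real.exp (s * X 0 ω)) μ)
    (hlt : (∫ ω, Real.exp (s * X 0 ω) ∂μ) < Real.exp (s / R)) :
    μ {ω | t < depart (fun n _ => (n : ℝ) / R) X ⌈R * (t - d)⌉₊ ω} ≤
      ENNReal.ofReal (Real.exp (-s * (d - 1 / R)) * (∫ ω, Real.exp (s * X 0 ω) ∂μ) /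
        (1 - (∫ ω, Real.exp (s * X 0 ω) ∂μ) * Real.exp (-(s / R)))) := by
  classical
  set n := ⌈R * (t - d)⌉₊ with hn
  set m := ∫ ω, Real.exp (s * X 0 ω) ∂μ with hmdef
  have hmgf0 : m = mgf (X 0) μ s := rfl
  have hm_pos : 0 < m := hmgf0 ▸ mgf_pos' (IsProbabilityMeasure.ne_zero μ) hint
  -- identical distribution transfers
  have hexpm : Measurable (fun x : ℝ => Real.exp (s * x)) :=
    (measurable_id.const_mul s).exp
  have hint' : ∀ j, Integrable (fun ω => Real.exp (s * X j ω)) μ := by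
    intro j
    have h1 : Integrable (fun x => Real.exp (s * x)) (μ.map (X j)) := by
      rw [hident j, integrable_map_measure hexpm.aestronglyMeasurable
        (hmeas 0).aemeasurable]
      exact hint
    rw [integrable_map_measure hexpm.aestronglyMeasurable (hmeas j).aemeasurable] at h1
    exact h1
  have hmgfj : ∀ j, mgf (X j) μ s = m := by
    intro j
    rw [hmgf0]
    unfold mgf
    rw [← integral_map (hmeas j).aemeasurable
        (f := fun x => Real.exp (s * x)) hexpm.aestronglyMeasurable,
        hident j, integral_map (hmeas 0).aemeasurable hexpm.aestronglyMeasurable]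
  set b := m * Real.exp (-(s / R)) with hbdef
  have hb0 : 0 ≤ b := by positivity
  have hb1 : b < 1 := by
    have h := mul_lt_mul_of_pos_right hlt (Real.exp_pos (-(s / R)))
    rwa [← Real.exp_add, add_neg_cancel, Real.exp_zero] at h
  have hceil : (n : ℝ) < R * (t - d) + 1 :=
    Nat.ceil_lt_add_one (by nlinarith)
  -- union bound decomposition
  have hsubset : {ω | t < depart (fun k (_ : Ω) => (k : ℝ) / R) X n ω} ⊆
      ⋃ v ∈ Finset.range (n + 1),
        {ω | t - ((n - v : ℕ) : ℝ) / R ≤ ∑ i ∈ Finset.range (v + 1), X (n - i) ω} := by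
    intro ω hω
    have hω' : t < depart (fun k (_ : Ω) => (k : ℝ) / R) X n ω := hω
    obtain ⟨v, hv, hvt⟩ := (Finset.lt_sup'_iff _).mp hω'
    beta_reduce at hvt
    refine Set.mem_biUnion hv ?_
    simp only [Set.mem_setOf_eq]
    linarith
  have hkey : ∀ v ∈ Finset.range (n + 1),
      μ {ω | t - ((n - v : ℕ) : ℝ) / R ≤ ∑ i ∈ Finset.range (v + 1), X (n - i) ω}
        ≤ ENNReal.ofReal (Real.exp (-s * (d - 1 / R)) * m * b ^ v) := by
    intro v hv
    have hvn : v ≤ n := Nat.lt_succ_iff.mp (Finset.mem_range.mp hv)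
    set F := (Finset.range (v + 1)).image (fun i => n - i) with hF
    have hinj : ∀ a ∈ Finset.range (v + 1), ∀ c ∈ Finset.range (v + 1),
        n - a = n - c → a = c := by
      intro a ha c hc hac
      simp only [Finset.mem_range] at ha hc
      omega
    have hcard : F.card = v + 1 := by
      rw [hF, Finset.card_image_of_injOn fun a ha c hc h => hinj a ha c hc h,
        Finset.card_range]
    have hsumeq : ∀ ω, (∑ j ∈ F, X j) ω = ∑ i ∈ Finset.range (v + 1), X (n - i) ω := by
      intro ω
      rw [Finset.sum_apply, hF, Finset.sum_image hinj]
    have hintS : Integrable (fun ω => Real.exp (s * (∑ j ∈ F, X j) ω)) μ :=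
      hindep.integrable_exp_mul_sum hmeas (fun i _ => hint' i)
    have hchern := measure_ge_le_exp_mul_mgf (μ := μ) (X := ∑ j ∈ F, X j)
      (t - ((n - v : ℕ) : ℝ) / R) hs.le hintS
    have hmgfS : mgf (∑ j ∈ F, X j) μ s = m ^ (v + 1) := by
      rw [hindep.mgf_sum hmeas, Finset.prod_congr rfl (fun j _ => hmgfj j),
        Finset.prod_const, hcard]
    -- arithmetic bound on the Chernoff term
    have hcast : ((n - v : ℕ) : ℝ) = (n : ℝ) - v := by
      rw [Nat.cast_sub hvn]
    have heps : d - 1 / R + v / R ≤ t - ((n - v : ℕ) : ℝ) / R := by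
      rw [hcast]
      have h1 : (n : ℝ) / R < t - d + 1 / R := by
        rw [div_lt_iff₀ hR]
        calc (n : ℝ) < R * (t - d) + 1 := hceil
        _ = (t - d + 1 / R) * R := by field_simp
      have : ((n : ℝ) - v) / R = (n : ℝ) / R - v / R := by ring
      rw [this]
      linarith
    have hexp : Real.exp (-s * (t - ((n - v : ℕ) : ℝ) / R))
        ≤ Real.exp (-s * (d - 1 / R)) * Real.exp (-(s / R)) ^ v := by
      rw [← Real.exp_nat_mul, ← Real.exp_add]
      apply Real.exp_le_exp.mpr
      have : (v : ℝ) * -(s / R) = -s * (v / R) := by ring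
      rw [this]
      nlinarith [heps]
    have hterm : Real.exp (-s * (t - ((n - v : ℕ) : ℝ) / R)) * m ^ (v + 1)
        ≤ Real.exp (-s * (d - 1 / R)) * m * b ^ v := by
      have h2 : Real.exp (-s * (t - ((n - v : ℕ) : ℝ) / R)) * m ^ (v + 1)
          ≤ (Real.exp (-s * (d - 1 / R)) * Real.exp (-(s / R)) ^ v) * m ^ (v + 1) := by
        apply mul_le_mul_of_nonneg_right hexp (by positivity)
      refine h2.trans_eq ?_
      rw [hbdef, mul_pow, pow_succ]
      ring
    calc μ {ω | t - ((n - v : ℕ) : ℝ) / R ≤ ∑ i ∈ Finset.range (v + 1), X (n - i) ω}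
        = ENNReal.ofReal
          (μ {ω | t - ((n - v : ℕ) : ℝ) / R ≤ (∑ j ∈ F, X j) ω}).toReal := by
          rw [ENNReal.ofReal_toReal (measure_ne_top μ _)]
          congr 1
          ext ω
          rw [Set.mem_setOf_eq, Set.mem_setOf_eq, hsumeq ω]
      _ ≤ ENNReal.ofReal (Real.exp (-s * (d - 1 / R)) * m * b ^ v) := by
          apply ENNReal.ofReal_le_ofReal
          refine hchern.trans ?_
          rw [hmgfS]
          exact hterm
  -- sum the geometric series
  have hgeom : ∑ v ∈ Finset.range (n + 1), Real.exp (-s * (d - 1 / R)) * m * b ^ v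
      ≤ Real.exp (-s * (d - 1 / R)) * m / (1 - b) := by
    rw [← Finset.mul_sum, div_eq_mul_inv]
    apply mul_le_mul_of_nonneg_left _ (by positivity)
    exact sum_le_hasSum _ (fun i _ => by positivity)
      (hasSum_geometric_of_lt_one hb0 hb1)
  calc μ {ω | t < depart (fun k (_ : Ω) => (k : ℝ) / R) X n ω}
      ≤ μ (⋃ v ∈ Finset.range (n + 1),
        {ω | t - ((n - v : ℕ) : ℝ) / R ≤ ∑ i ∈ Finset.range (v + 1), X (n - i) ω}) :=
        measure_mono hsubset
    _ ≤ ∑ v ∈ Finset.range (n + 1),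
        μ {ω | t - ((n - v : ℕ) : ℝ) / R ≤ ∑ i ∈ Finset.range (v + 1), X (n - i) ω} :=
        measure_biUnion_finset_le _ _
    _ ≤ ∑ v ∈ Finset.range (n + 1),
        ENNReal.ofReal (Real.exp (-s * (d - 1 / R)) * m * b ^ v) :=
        Finset.sum_le_sum hkey
    _ = ENNReal.ofReal (∑ v ∈ Finset.range (n + 1),
        Real.exp (-s * (d - 1 / R)) * m * b ^ v) :=
        (ENNReal.ofReal_sum_of_nonneg (fun v _ => by positivity)).symm
    _ ≤ ENNReal.ofReal (Real.exp (-s * (d - 1 / R)) * m / (1 - b)) :=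
        ENNReal.ofReal_le_ofReal hgeom
end

section
/- Let s > 0, m > 0 and d ∈ ℝ. The function T ↦ e^{-s d} · m · e^{2 s T} / (e^{s T} - m), defined on the open interval ( (ln m)/s, ∞ ) (where e^{s T} > m), is strictly convex. -/
/-- The single-hop Chernoff upper bound, written in the inter-arrival time `T = 1/R` as
`Ψ₁(s,d,T) = e^{-sd} · m · e^{2sT} / (e^{sT} - m)` with `m = M(s)`, is strictly convex in `T`
on the region `e^{sT} > m`. -/
theorem stmt8 (s m d : ℝ) (hs : 0 < s) (hm : 0 < m) :
    StrictConvexOn ℝ (Set.Ioi (Real.log m / s))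
      (fun T => Real.exp (-s * d) * m * Real.exp (2 * s * T) / (Real.exp (s * T) - m)) := by
  set C := Real.exp (-s * d) * m with hCdef
  have hC : 0 < C := mul_pos (Real.exp_pos _) hm
  set D : Set ℝ := Set.Ioi (Real.log m / s) with hDdef
  have hDopen : IsOpen D := isOpen_Ioi
  set f : ℝ → ℝ := fun T => C * Real.exp (2 * s * T) / (Real.exp (s * T) - m) with hfdef
  have key : ∀ x ∈ D, m < Real.exp (s * x) := by
    intro x hx
    have hx' : Real.log m / s < x := hx
    have h1 : Real.log m < s * x := by
      rw [div_lt_iff₀ hs] at hx'; linarith [mul_comm x s]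
    calc m = Real.exp (Real.log m) := (Real.exp_log hm).symm
      _ < Real.exp (s * x) := Real.exp_lt_exp.mpr h1
  -- first derivative
  set f' : ℝ → ℝ := fun x =>
    C * s * Real.exp (s * x) ^ 2 * (Real.exp (s * x) - 2 * m) /
      (Real.exp (s * x) - m) ^ 2 with hf'def
  set f'' : ℝ → ℝ := fun x =>
    C * s ^ 2 * Real.exp (s * x) ^ 2 *
      (Real.exp (s * x) ^ 2 - 3 * m * Real.exp (s * x) + 4 * m ^ 2) /
      (Real.exp (s * x) - m) ^ 3 with hf''def
  have hu : ∀ x : ℝ, HasDerivAt (fun y => Real.exp (s * y)) (s * Real.exp (s * x)) x := by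
    intro x
    have := ((hasDerivAt_id x).const_mul s).exp
    simpa [mul_comm] using this
  have hu2 : ∀ x : ℝ, HasDerivAt (fun y => Real.exp (2 * s * y)) (2 * s * Real.exp (2 * s * x)) x := by
    intro x
    have := ((hasDerivAt_id x).const_mul (2 * s)).exp
    simpa [mul_comm] using this
  have hsq : ∀ x : ℝ, Real.exp (2 * s * x) = Real.exp (s * x) ^ 2 := by
    intro x; rw [sq, ← Real.exp_add]; ring_nf
  have hden : ∀ x ∈ D, Real.exp (s * x) - m ≠ 0 := fun x hx => sub_ne_zero.mpr (key x hx).ne'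
  have hDf : ∀ x ∈ D, HasDerivAt f (f' x) x := by
    intro x hx
    have H : HasDerivAt f
        ((C * (2 * s * Real.exp (2 * s * x)) * (Real.exp (s * x) - m) -
          C * Real.exp (2 * s * x) * (s * Real.exp (s * x))) /
          (Real.exp (s * x) - m) ^ 2) x :=
      (((hu2 x).const_mul C).div ((hu x).sub_const m) (hden x hx))
    convert H using 1
    rw [hf'def, hsq x]
    field_simp
    ring
  have hDf' : ∀ x ∈ D, HasDerivAt f' (f'' x) x := by
    intro x hx
    have hnum : HasDerivAt (fun y => C * s * Real.exp (s * y) ^ 2 * (Real.exp (s * y) - 2 * m))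
        ((C * s * (2 * Real.exp (s * x) ^ 1 * (s * Real.exp (s * x)))) *
          (Real.exp (s * x) - 2 * m) +
          C * s * Real.exp (s * x) ^ 2 * (s * Real.exp (s * x))) x := by
      exact (((hu x).pow 2).const_mul (C * s)).mul ((hu x).sub_const (2 * m))
    have hd2 : HasDerivAt (fun y => (Real.exp (s * y) - m) ^ 2)
        (2 * (Real.exp (s * x) - m) ^ 1 * (s * Real.exp (s * x))) x :=
      ((hu x).sub_const m).pow 2
    have h0 := hden x hx
    have H : HasDerivAt f' _ x := hnum.div hd2 (pow_ne_zero 2 h0)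
    convert H using 1
    rw [hf''def]
    field_simp [h0]
    ring
  apply strictConvexOn_of_deriv2_pos (convex_Ioi _)
  · intro x hx
    exact ((hDf x hx).continuousAt).continuousWithinAt
  · intro x hx
    rw [interior_Ioi] at hx
    have hxD : x ∈ D := hx
    have hderiv_eq : deriv (deriv f) x = f'' x := by
      have hev : deriv f =ᶠ[nhds x] f' := by
        filter_upwards [hDopen.mem_nhds hxD] with y hy using (hDf y hy).deriv
      rw [Filter.EventuallyEq.deriv_eq hev]
      exact (hDf' x hxD).deriv
    show 0 < deriv^[2] f x
    rw [Function.iterate_succ, Function.iterate_one, Function.comp_apply, hderiv_eq, hf''def]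
    have hu1 : m < Real.exp (s * x) := key x hxD
    have hupos : 0 < Real.exp (s * x) := Real.exp_pos _
    apply div_pos
    · have : 0 < Real.exp (s * x) ^ 2 - 3 * m * Real.exp (s * x) + 4 * m ^ 2 := by
        nlinarith [sq_nonneg (Real.exp (s * x) - 2 * m), sq_nonneg m]
      positivity
    · exact pow_pos (sub_pos.mpr hu1) 3
end

section
/- Let X be a nonnegative real random variable, R > 0 and d > 0, and let S′ ⊆ (0, ∞) be a convex set such that for every s ∈ S′ the moment generating function M(s) = E[e^{s X}] is finite and satisfies M(s) < e^{s/R}. Then the function s ↦ e^{-s(d - 1/R)} M(s) / (1 - M(s) e^{-s/R}) is convex on S′. -/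
open MeasureTheory

/-- Hölder inequality for the MGF: log-convexity in multiplicative form. -/
lemma mgf_holder {Ω : Type*} [MeasurableSpace Ω] (μ : Measure Ω)
    (X : Ω → ℝ) (hmeas : Measurable X) {x y a b : ℝ}
    (hix : Integrable (fun ω => Real.exp (x * X ω)) μ)
    (hiy : Integrable (fun ω => Real.exp (y * X ω)) μ)
    (ha : 0 < a) (hb : 0 < b) (hab : a + b = 1) :
    (∫ ω, Real.exp ((a * x + b * y) * X ω) ∂μ) ≤
      (∫ ω, Real.exp (x * X ω) ∂μ) ^ a * (∫ ω, Real.exp (y * X ω) ∂μ) ^ b := by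
  have e : Real.HolderConjugate (1 / a) (1 / b) := Real.holderConjugate_one_div ha hb hab
  have memLp : ∀ (z c : ℝ), 0 < c → Integrable (fun ω => Real.exp (z * X ω)) μ →
      MemLp (fun ω => Real.exp (z * X ω) ^ c) (ENNReal.ofReal (1 / c)) μ := by
    intro z c hc hi
    have A : ENNReal.ofReal (1 / c) ≠ 0 := by
      simp [ENNReal.ofReal_eq_zero, not_le, one_div_pos, hc]
    have B : ENNReal.ofReal (1 / c) ≠ ⊤ := ENNReal.ofReal_ne_top
    have hm : AEStronglyMeasurable (fun ω => Real.exp (z * X ω) ^ c) μ :=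
      ((((hmeas.const_mul z).mul_const c).exp.aestronglyMeasurable).congr
        (Filter.Eventually.of_forall fun ω => Real.exp_mul _ _))
    rw [← memLp_norm_rpow_iff hm A B, ENNReal.toReal_ofReal (by positivity),
      ENNReal.div_self A B, memLp_one_iff_integrable]
    refine hi.congr ?_
    filter_upwards with ω
    rw [Real.norm_of_nonneg (Real.rpow_nonneg (Real.exp_pos _).le _),
      ← Real.rpow_mul (Real.exp_pos _).le, mul_one_div, div_self hc.ne', Real.rpow_one]
  have key := MeasureTheory.integral_mul_le_Lp_mul_Lq_of_nonneg e
    (f := fun ω => Real.exp (x * X ω) ^ a) (g := fun ω => Real.exp (y * X ω) ^ b)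
    (Filter.Eventually.of_forall fun ω => Real.rpow_nonneg (Real.exp_pos _).le _)
    (Filter.Eventually.of_forall fun ω => Real.rpow_nonneg (Real.exp_pos _).le _)
    (memLp x a ha hix) (memLp y b hb hiy)
  have hfg : ∀ ω, Real.exp (x * X ω) ^ a * Real.exp (y * X ω) ^ b
      = Real.exp ((a * x + b * y) * X ω) := by
    intro ω
    rw [← Real.exp_mul, ← Real.exp_mul, ← Real.exp_add]
    ring_nf
  have hfa : ∀ ω, (Real.exp (x * X ω) ^ a) ^ (1 / a) = Real.exp (x * X ω) := by
    intro ω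
    rw [← Real.rpow_mul (Real.exp_pos _).le, mul_one_div, div_self ha.ne', Real.rpow_one]
  have hfb : ∀ ω, (Real.exp (y * X ω) ^ b) ^ (1 / b) = Real.exp (y * X ω) := by
    intro ω
    rw [← Real.rpow_mul (Real.exp_pos _).le, mul_one_div, div_self hb.ne', Real.rpow_one]
  calc (∫ ω, Real.exp ((a * x + b * y) * X ω) ∂μ)
      = ∫ ω, Real.exp (x * X ω) ^ a * Real.exp (y * X ω) ^ b ∂μ := by
        exact integral_congr_ae (Filter.Eventually.of_forall fun ω => (hfg ω).symm)
    _ ≤ (∫ ω, (Real.exp (x * X ω) ^ a) ^ (1 / a) ∂μ) ^ (1 / (1 / a)) *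
        (∫ ω, (Real.exp (y * X ω) ^ b) ^ (1 / b) ∂μ) ^ (1 / (1 / b)) := key
    _ = (∫ ω, Real.exp (x * X ω) ∂μ) ^ a * (∫ ω, Real.exp (y * X ω) ∂μ) ^ b := by
        rw [one_div_one_div, one_div_one_div]
        congr 2
        · exact integral_congr_ae (Filter.Eventually.of_forall hfa)
        · exact integral_congr_ae (Filter.Eventually.of_forall hfb)

/-- The single-hop Chernoff upper bound `Ψ₁(s,d,R) = e^{-s(d-1/R)} M(s)/(1 - M(s)e^{-s/R})`
is convex in `s` on any convex set `S' ⊆ (0,∞)` on which the MGF `M(s) = E[e^{sX}]` is finite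
and satisfies `M(s) < e^{s/R}`. -/
theorem stmt9 {Ω : Type*} [MeasurableSpace Ω] (μ : Measure Ω) [IsProbabilityMeasure μ]
    (X : Ω → ℝ) (hmeas : Measurable X) (hnn : ∀ ω, 0 ≤ X ω)
    (R d : ℝ) (hR : 0 < R) (hd : 0 < d)
    (S' : Set ℝ) (hS'conv : Convex ℝ S') (hS'pos : S' ⊆ Set.Ioi 0)
    (hint : ∀ s ∈ S', Integrable (fun ω => Real.exp (s * X ω)) μ)
    (hlt : ∀ s ∈ S', (∫ ω, Real.exp (s * X ω) ∂μ) < Real.exp (s / R)) :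
    ConvexOn ℝ S' (fun s => Real.exp (-s * (d - 1 / R)) * (∫ ω, Real.exp (s * X ω) ∂μ) /
      (1 - (∫ ω, Real.exp (s * X ω) ∂μ) * Real.exp (-(s / R)))) := by
  set M : ℝ → ℝ := fun s => ∫ ω, Real.exp (s * X ω) ∂μ with hMdef
  have hMnn : ∀ s, 0 ≤ M s := fun s =>
    integral_nonneg fun ω => (Real.exp_pos _).le
  set r : ℝ → ℝ := fun s => M s * Real.exp (-(s / R)) with hrdef
  have hr0 : ∀ s, 0 ≤ r s := fun s => mul_nonneg (hMnn s) (Real.exp_pos _).le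
  have hr1 : ∀ s ∈ S', r s < 1 := by
    intro s hs
    have h := (div_lt_one (Real.exp_pos (s / R))).mpr (hlt s hs)
    calc r s = M s / Real.exp (s / R) := by
          simp only [hrdef, Real.exp_neg, div_eq_mul_inv]
      _ < 1 := h
  set g : ℕ → ℝ → ℝ := fun v s =>
    Real.exp (-(d - 1 / R + v / R) * s) * M s ^ ((v : ℝ) + 1) with hgdef
  have hg_eq : ∀ (v : ℕ) (s : ℝ),
      g v s = (Real.exp (-s * (d - 1 / R)) * M s) * r s ^ v := by
    intro v s
    simp only [hgdef, hrdef]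
    rw [show ((v : ℝ) + 1) = ((v + 1 : ℕ) : ℝ) by push_cast; ring, Real.rpow_natCast,
      mul_pow, ← Real.exp_nat_mul,
      show (-(d - 1 / R + (v : ℝ) / R) * s)
        = (-s * (d - 1 / R)) + (v : ℝ) * -(s / R) by ring,
      Real.exp_add, pow_succ]
    ring
  have hgsum : ∀ s ∈ S', Summable (fun v => g v s) := by
    intro s hs
    exact ((summable_geometric_of_lt_one (hr0 s) (hr1 s hs)).mul_left
      (Real.exp (-s * (d - 1 / R)) * M s)).congr (fun v => (hg_eq v s).symm)
  have hgclosed : ∀ s ∈ S',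
      Real.exp (-s * (d - 1 / R)) * M s / (1 - M s * Real.exp (-(s / R)))
        = ∑' v, g v s := by
    intro s hs
    rw [show (fun v : ℕ => g v s)
        = fun v => (Real.exp (-s * (d - 1 / R)) * M s) * r s ^ v from
        funext fun v => hg_eq v s, tsum_mul_left,
      tsum_geometric_of_lt_one (hr0 s) (hr1 s hs), div_eq_mul_inv]
  have hterm : ∀ (v : ℕ) (x : ℝ), x ∈ S' → ∀ (y : ℝ), y ∈ S' → ∀ (a b : ℝ),
      0 < a → 0 < b → a + b = 1 → g v (a * x + b * y) ≤ a * g v x + b * g v y := by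
    intro v x hx y hy a b ha hb hab
    set c : ℝ := d - 1 / R + (v : ℝ) / R with hc
    set n : ℝ := (v : ℝ) + 1 with hn
    have hgv : ∀ s, g v s = Real.exp (-c * s) * M s ^ n := fun s => rfl
    have hn0 : (0 : ℝ) ≤ n := by positivity
    have hMz : M (a * x + b * y) ≤ M x ^ a * M y ^ b :=
      mgf_holder μ X hmeas (hint x hx) (hint y hy) ha hb hab
    have step1 : g v (a * x + b * y) ≤
        (Real.exp (-c * x) * M x ^ n) ^ a * (Real.exp (-c * y) * M y ^ n) ^ b := by
      have h1 : M (a * x + b * y) ^ n ≤ (M x ^ a * M y ^ b) ^ n :=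
        Real.rpow_le_rpow (hMnn _) hMz hn0
      have h2 : (M x ^ a * M y ^ b) ^ n = (M x ^ n) ^ a * (M y ^ n) ^ b := by
        rw [Real.mul_rpow (Real.rpow_nonneg (hMnn x) _) (Real.rpow_nonneg (hMnn y) _),
          ← Real.rpow_mul (hMnn x), ← Real.rpow_mul (hMnn y),
          ← Real.rpow_mul (hMnn x), ← Real.rpow_mul (hMnn y), mul_comm a n, mul_comm b n]
      have h3 : Real.exp (-c * (a * x + b * y))
          = Real.exp (-c * x) ^ a * Real.exp (-c * y) ^ b := by
        rw [← Real.exp_mul, ← Real.exp_mul, ← Real.exp_add]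
        ring_nf
      calc g v (a * x + b * y)
          = Real.exp (-c * (a * x + b * y)) * M (a * x + b * y) ^ n := hgv _
        _ ≤ Real.exp (-c * (a * x + b * y)) * ((M x ^ n) ^ a * (M y ^ n) ^ b) :=
            mul_le_mul_of_nonneg_left (h1.trans_eq h2) (Real.exp_pos _).le
        _ = (Real.exp (-c * x) * M x ^ n) ^ a * (Real.exp (-c * y) * M y ^ n) ^ b := by
            rw [h3, Real.mul_rpow (Real.exp_pos _).le (Real.rpow_nonneg (hMnn x) _),
              Real.mul_rpow (Real.exp_pos _).le (Real.rpow_nonneg (hMnn y) _)]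
            ring
    have step2 : (Real.exp (-c * x) * M x ^ n) ^ a * (Real.exp (-c * y) * M y ^ n) ^ b
        ≤ a * (Real.exp (-c * x) * M x ^ n) + b * (Real.exp (-c * y) * M y ^ n) :=
      Real.geom_mean_le_arith_mean2_weighted ha.le hb.le
        (mul_nonneg (Real.exp_pos _).le (Real.rpow_nonneg (hMnn x) _))
        (mul_nonneg (Real.exp_pos _).le (Real.rpow_nonneg (hMnn y) _)) hab
    rw [hgv x, hgv y]
    exact step1.trans step2
  refine convexOn_iff_forall_pos.mpr ⟨hS'conv, fun x hx y hy a b ha hb hab => ?_⟩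
  simp only [smul_eq_mul]
  have hz : a * x + b * y ∈ S' := hS'conv hx hy ha.le hb.le hab
  show Real.exp (-(a * x + b * y) * (d - 1 / R)) * M (a * x + b * y) /
      (1 - M (a * x + b * y) * Real.exp (-((a * x + b * y) / R))) ≤
    a * (Real.exp (-x * (d - 1 / R)) * M x / (1 - M x * Real.exp (-(x / R)))) +
    b * (Real.exp (-y * (d - 1 / R)) * M y / (1 - M y * Real.exp (-(y / R))))
  rw [hgclosed _ hz, hgclosed _ hx, hgclosed _ hy, ← tsum_mul_left, ← tsum_mul_left,
    ← Summable.tsum_add ((hgsum x hx).mul_left a) ((hgsum y hy).mul_left b)]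
  exact Summable.tsum_le_tsum (fun v => hterm v x hx y hy a b ha hb hab) (hgsum _ hz)
    (((hgsum x hx).mul_left a).add ((hgsum y hy).mul_left b))
end

section
/- Let (X^i)_{i≥0} be i.i.d. nonnegative real random variables, R > 0, d > 0, and let s > 0 satisfy M(s) = E[e^{s X^0}] < ∞ and M(s) < e^{s/R}; set β(s) = M(s) e^{-s/R} and Ψ1(s,d,R) = e^{-s(d - 1/R)} M(s)/(1 - β(s)). Then for every K ∈ ℕ, Σ_{v=K}^{∞} P( Σ_{i=0}^{v} X^i > d + (v-1)/R ) ≤ Ψ1(s,d,R) · β(s)^K. -/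
open MeasureTheory ProbabilityTheory

/-- Geometric tail bound: for i.i.d. nonnegative service times with MGF `M(s) < e^{s/R}`,
the tail `Σ_{v ≥ K} Φ(v,R)` of the union-bound series
`Φ(v,R) = P(Σ_{i=0}^{v} Xⁱ > d + (v-1)/R)` is at most `Ψ₁(s,d,R) β(s)^K`, where
`β(s) = M(s) e^{-s/R}` and `Ψ₁(s,d,R) = e^{-s(d-1/R)} M(s)/(1-β(s))`. -/
theorem stmt10 {Ω : Type*} [MeasurableSpace Ω] (μ : Measure Ω) [IsProbabilityMeasure μ]
    (X : ℕ → Ω → ℝ) (hmeas : ∀ i, Measurable (X i)) (hnn : ∀ i ω, 0 ≤ X i ω)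
    (hindep : iIndepFun X μ)
    (hident : ∀ i, μ.map (X i) = μ.map (X 0))
    (R d s : ℝ) (hR : 0 < R) (hd : 0 < d) (hs : 0 < s)
    (hint : Integrable (fun ω => Real.exp (s * X 0 ω)) μ)
    (hlt : (∫ ω, Real.exp (s * X 0 ω) ∂μ) < Real.exp (s / R)) (K : ℕ) :
    (∑' v : ℕ, μ {ω | d + (((K + v : ℕ) : ℝ) - 1) / R <
        ∑ i ∈ Finset.range (K + v + 1), X i ω}) ≤
      ENNReal.ofReal ((Real.exp (-s * (d - 1 / R)) * (∫ ω, Real.exp (s * X 0 ω) ∂μ) /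
        (1 - (∫ ω, Real.exp (s * X 0 ω) ∂μ) * Real.exp (-(s / R)))) *
        ((∫ ω, Real.exp (s * X 0 ω) ∂μ) * Real.exp (-(s / R))) ^ K) := by
  set M : ℝ := ∫ ω, Real.exp (s * X 0 ω) ∂μ with hM
  set β : ℝ := M * Real.exp (-(s / R)) with hβ
  have hM0 : 0 < M := by
    have := ProbabilityTheory.mgf_pos (X := X 0) (μ := μ) (t := s) hint
    simpa [ProbabilityTheory.mgf] using this
  have hβ0 : 0 ≤ β := by positivity
  have hβ1 : β < 1 := by
    have h1 : β < Real.exp (s / R) * Real.exp (-(s / R)) := by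
      have : (0:ℝ) < Real.exp (-(s / R)) := Real.exp_pos _
      exact mul_lt_mul_of_pos_right hlt this
    rwa [← Real.exp_add, add_neg_cancel, Real.exp_zero] at h1
  -- integrability and mgf of each X i
  have hint_i : ∀ i, Integrable (fun ω => Real.exp (s * X i ω)) μ := by
    intro i
    have h0 : Integrable (fun x => Real.exp (s * x)) (μ.map (X 0)) := by
      rw [integrable_map_measure
        (Measurable.aestronglyMeasurable ((measurable_const_mul s).exp)) (hmeas 0).aemeasurable]
      exact hint
    have h1 : Integrable (fun x => Real.exp (s * x)) (μ.map (X i)) := by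
      rw [hident i]; exact h0
    rw [integrable_map_measure
      (Measurable.aestronglyMeasurable ((measurable_const_mul s).exp)) (hmeas i).aemeasurable] at h1
    exact h1
  have hmgf_i : ∀ i, ProbabilityTheory.mgf (X i) μ s = M := by
    intro i
    have h1 : ∫ ω, Real.exp (s * X i ω) ∂μ
        = ∫ x, Real.exp (s * x) ∂(μ.map (X i)) := by
      rw [integral_map (hmeas i).aemeasurable
        (Measurable.aestronglyMeasurable ((measurable_const_mul s).exp))]
    have h2 : ∫ x, Real.exp (s * x) ∂(μ.map (X 0)) = M := by
      rw [integral_map (hmeas 0).aemeasurable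
        (Measurable.aestronglyMeasurable ((measurable_const_mul s).exp))]
    simp only [ProbabilityTheory.mgf]
    rw [h1, hident i, h2]
  -- Chernoff term bound
  set c : ℝ := Real.exp (-s * (d - 1 / R)) * M with hc
  have hc0 : 0 ≤ c := by positivity
  have key : ∀ v : ℕ,
      μ {ω | d + (((K + v : ℕ) : ℝ) - 1) / R < ∑ i ∈ Finset.range (K + v + 1), X i ω}
        ≤ ENNReal.ofReal (c * β ^ K * β ^ v) := by
    intro v
    set m : ℕ := K + v with hm
    set a : ℝ := d + (((m : ℕ) : ℝ) - 1) / R with ha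
    have hintS : Integrable (fun ω => Real.exp (s * (∑ i ∈ Finset.range (m + 1), X i) ω)) μ :=
      hindep.integrable_exp_mul_sum hmeas (fun i _ => hint_i i)
    have hch := ProbabilityTheory.measure_ge_le_exp_mul_mgf (μ := μ)
      (X := fun ω => ∑ i ∈ Finset.range (m + 1), X i ω) a hs.le (by simpa using hintS)
    have hmgfS : ProbabilityTheory.mgf (fun ω => ∑ i ∈ Finset.range (m + 1), X i ω) μ s
        = M ^ (m + 1) := by
      have := hindep.mgf_sum hmeas (t := s) (Finset.range (m + 1))
      simp only [hmgf_i, Finset.prod_const, Finset.card_range] at this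
      rw [← this]; congr 1; ext ω; simp
    rw [hmgfS] at hch
    have hsub : μ {ω | a < ∑ i ∈ Finset.range (m + 1), X i ω}
        ≤ μ {ω | a ≤ (fun ω => ∑ i ∈ Finset.range (m + 1), X i ω) ω} :=
      measure_mono (by intro ω hω; exact (Set.mem_setOf_eq ▸ hω).le)
    have heq : Real.exp (-s * a) * M ^ (m + 1) = c * β ^ K * β ^ v := by
      have hexp : -s * a = -s * (d - 1 / R) + (m : ℝ) * (-(s / R)) := by
        rw [ha]
        field_simp
        ring
      rw [hexp, Real.exp_add, hc, hβ, mul_pow, mul_pow, Real.exp_nat_mul, hm]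
      ring
    calc μ {ω | a < ∑ i ∈ Finset.range (m + 1), X i ω}
        ≤ μ {ω | a ≤ (fun ω => ∑ i ∈ Finset.range (m + 1), X i ω) ω} := hsub
      _ = ENNReal.ofReal ((μ {ω | a ≤ (fun ω => ∑ i ∈ Finset.range (m + 1), X i ω) ω}).toReal) :=
          (ENNReal.ofReal_toReal (measure_ne_top _ _)).symm
      _ ≤ ENNReal.ofReal (Real.exp (-s * a) * M ^ (m + 1)) := ENNReal.ofReal_le_ofReal hch
      _ = ENNReal.ofReal (c * β ^ K * β ^ v) := by rw [heq]
  have hsum : Summable (fun v : ℕ => c * β ^ K * β ^ v) :=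
    (summable_geometric_of_lt_one hβ0 hβ1).mul_left _
  calc (∑' v : ℕ, μ {ω | d + (((K + v : ℕ) : ℝ) - 1) / R <
        ∑ i ∈ Finset.range (K + v + 1), X i ω})
      ≤ ∑' v : ℕ, ENNReal.ofReal (c * β ^ K * β ^ v) := ENNReal.tsum_le_tsum key
    _ = ENNReal.ofReal (∑' v : ℕ, c * β ^ K * β ^ v) :=
        (ENNReal.ofReal_tsum_of_nonneg (fun v => by positivity) hsum).symm
    _ = ENNReal.ofReal ((Real.exp (-s * (d - 1 / R)) * M / (1 - β)) * β ^ K) := by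
        rw [tsum_mul_left, tsum_geometric_of_lt_one hβ0 hβ1]
        congr 1
        rw [hc]
        field_simp
end

section
/- Let (X^i)_{i≥0} be i.i.d. nonnegative real random variables, R > 0, d > 0, t ≥ d, n̂ = ⌈R(t-d)⌉, and D(n̂) = max_{0 ≤ v ≤ n̂} ( (n̂ - v)/R + Σ_{i=0}^{v} X^{n̂ - i} ). Let s > 0 satisfy M(s) = E[e^{s X^0}] < ∞ and M(s) < e^{s/R}, and set β(s) = M(s)e^{-s/R} and Ψ1(s,d,R) = e^{-s(d-1/R)} M(s)/(1-β(s)). Then for every K ∈ ℕ, P( D(n̂) > t ) ≤ Σ_{v=0}^{K-1} P( Σ_{i=0}^{v} X^i > d + (v-1)/R ) + Ψ1(s,d,R) · β(s)^K. -/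
open MeasureTheory ProbabilityTheory

section Aux

variable {Ω : Type*} [MeasurableSpace Ω] {μ : Measure Ω} [IsProbabilityMeasure μ]
  {X : ℕ → Ω → ℝ}

/-- map of sum of a pair of independent rvs is determined by the marginal maps. -/
lemma map_add_of_indep (hmeas : ∀ i, Measurable (X i))
    (hindep : iIndepFun X μ)
    {s : Finset ℕ} {j : ℕ} (hj : j ∉ s) :
    μ.map (fun ω => (∑ i ∈ s, X i ω) + X j ω) =
      ((μ.map (fun ω => ∑ i ∈ s, X i ω)).prod (μ.map (X j))).map
        (fun p : ℝ × ℝ => p.1 + p.2) := by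
  have hS : Measurable fun ω => ∑ i ∈ s, X i ω :=
    Finset.measurable_sum _ fun i _ => hmeas i
  have hind : IndepFun (∑ i ∈ s, X i) (X j) μ :=
    hindep.indepFun_finsetSum_of_notMem hmeas hj
  have hfun : (fun ω => ∑ i ∈ s, X i ω) = ∑ i ∈ s, X i := by
    funext ω; simp
  have hind' : IndepFun (fun ω => ∑ i ∈ s, X i ω) (X j) μ := by
    rw [hfun]; exact hind
  rw [(indepFun_iff_map_prod_eq_prod_map_map hS.aemeasurable
    (hmeas j).aemeasurable).mp hind' |>.symm]
  have : (fun ω => (∑ i ∈ s, X i ω) + X j ω) =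
      (fun p : ℝ × ℝ => p.1 + p.2) ∘ (fun ω => (∑ i ∈ s, X i ω, X j ω)) := rfl
  rw [this, ← Measure.map_map measurable_add (hS.prodMk (hmeas j))]

/-- For iid random variables, the law of the sum over a finset depends only on cardinality. -/
lemma map_sum_card (hmeas : ∀ i, Measurable (X i))
    (hindep : iIndepFun X μ)
    (hident : ∀ i, μ.map (X i) = μ.map (X 0)) :
    ∀ (n : ℕ) (s : Finset ℕ), s.card = n →
      μ.map (fun ω => ∑ i ∈ s, X i ω) =
        μ.map (fun ω => ∑ i ∈ Finset.range n, X i ω) := by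
  intro n
  induction n with
  | zero =>
    intro s hs
    rw [Finset.card_eq_zero] at hs
    simp [hs]
  | succ n ih =>
    intro s hs
    have hne : s.Nonempty := Finset.card_pos.mp (by omega)
    obtain ⟨j, hj⟩ := hne
    have hcard : (s.erase j).card = n := by
      rw [Finset.card_erase_of_mem hj]; omega
    have h1 : (fun ω => ∑ i ∈ s, X i ω) =
        (fun ω => (∑ i ∈ s.erase j, X i ω) + X j ω) := by
      funext ω
      rw [Finset.sum_erase_add _ _ hj]
    have h2 : (fun ω => ∑ i ∈ Finset.range (n + 1), X i ω) =
        (fun ω => (∑ i ∈ Finset.range n, X i ω) + X n ω) := by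
      funext ω
      rw [Finset.sum_range_succ]
    rw [h1, h2, map_add_of_indep hmeas hindep (Finset.notMem_erase j s),
      map_add_of_indep hmeas hindep (Finset.notMem_range_self),
      ih _ hcard, hident j, hident n]

lemma measure_sum_lt_eq (hmeas : ∀ i, Measurable (X i))
    (hindep : iIndepFun X μ)
    (hident : ∀ i, μ.map (X i) = μ.map (X 0)) (s : Finset ℕ) (c : ℝ) :
    μ {ω | c < ∑ i ∈ s, X i ω} =
      μ {ω | c < ∑ i ∈ Finset.range s.card, X i ω} := by
  have hS : Measurable fun ω => ∑ i ∈ s, X i ω :=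
    Finset.measurable_sum _ fun i _ => hmeas i
  have hS' : Measurable fun ω => ∑ i ∈ Finset.range s.card, X i ω :=
    Finset.measurable_sum _ fun i _ => hmeas i
  have h1 : {ω | c < ∑ i ∈ s, X i ω} =
      (fun ω => ∑ i ∈ s, X i ω) ⁻¹' Set.Ioi c := rfl
  have h2 : {ω | c < ∑ i ∈ Finset.range s.card, X i ω} =
      (fun ω => ∑ i ∈ Finset.range s.card, X i ω) ⁻¹' Set.Ioi c := rfl
  rw [h1, h2, ← Measure.map_apply hS measurableSet_Ioi,
    ← Measure.map_apply hS' measurableSet_Ioi,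
    map_sum_card hmeas hindep hident s.card s rfl]

end Aux

/-- The α-relaxed upper bound for the single-hop AoI violation probability: the first `K`
union-bound terms `Φ(v,R) = P(Σ_{i=0}^{v} Xⁱ > d + (v-1)/R)` are kept exactly and the tail is
bounded by `Ψ₁(s,d,R) β(s)^K`. -/
theorem stmt11 {Ω : Type*} [MeasurableSpace Ω] (μ : Measure Ω) [IsProbabilityMeasure μ]
    (X : ℕ → Ω → ℝ) (hmeas : ∀ i, Measurable (X i)) (hnn : ∀ i ω, 0 ≤ X i ω)
    (hindep : iIndepFun X μ)
    (hident : ∀ i, μ.map (X i) = μ.map (X 0))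
    (R d t s : ℝ) (hR : 0 < R) (hd : 0 < d) (ht : d ≤ t) (hs : 0 < s)
    (hint : Integrable (fun ω => Real.exp (s * X 0 ω)) μ)
    (hlt : (∫ ω, Real.exp (s * X 0 ω) ∂μ) < Real.exp (s / R)) (K : ℕ) :
    μ {ω | t < depart (fun n _ => (n : ℝ) / R) X ⌈R * (t - d)⌉₊ ω} ≤
      (∑ v ∈ Finset.range K,
        μ {ω | d + ((v : ℝ) - 1) / R < ∑ i ∈ Finset.range (v + 1), X i ω}) +
      ENNReal.ofReal ((Real.exp (-s * (d - 1 / R)) * (∫ ω, Real.exp (s * X 0 ω) ∂μ) /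
        (1 - (∫ ω, Real.exp (s * X 0 ω) ∂μ) * Real.exp (-(s / R)))) *
        ((∫ ω, Real.exp (s * X 0 ω) ∂μ) * Real.exp (-(s / R))) ^ K) := by
  classical
  set N : ℕ := ⌈R * (t - d)⌉₊ with hN
  set M : ℝ := ∫ ω, Real.exp (s * X 0 ω) ∂μ with hM
  set β : ℝ := M * Real.exp (-(s / R)) with hβ
  -- basic facts about M and β
  have hMpos : 0 < M := by
    have : 0 < mgf (X 0) μ s := mgf_pos hint
    simpa [mgf, hM] using this
  have hβpos : 0 < β := mul_pos hMpos (Real.exp_pos _)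
  have hβlt : β < 1 := by
    have : M * Real.exp (-(s / R)) < Real.exp (s / R) * Real.exp (-(s / R)) := by
      apply mul_lt_mul_of_pos_right hlt (Real.exp_pos _)
    rwa [← Real.exp_add, add_neg_cancel, Real.exp_zero] at this
  -- identical mgf and integrability for all i
  have hexpae : ∀ i : ℕ, AEStronglyMeasurable (fun x : ℝ => Real.exp (s * x)) (μ.map (X i)) :=
    fun i => (Real.continuous_exp.comp (continuous_const.mul continuous_id)).aestronglyMeasurable
  have hinti : ∀ i, Integrable (fun ω => Real.exp (s * X i ω)) μ := by
    intro i
    have h0 : Integrable (fun x : ℝ => Real.exp (s * x)) (μ.map (X 0)) := by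
      rw [integrable_map_measure (hexpae 0) (hmeas 0).aemeasurable]
      exact hint
    have hi : Integrable (fun x : ℝ => Real.exp (s * x)) (μ.map (X i)) := by
      rw [hident i]; exact h0
    rw [integrable_map_measure (hexpae i) (hmeas i).aemeasurable] at hi
    exact hi
  have hmgf : ∀ i, mgf (X i) μ s = M := by
    intro i
    have : ∫ ω, Real.exp (s * X i ω) ∂μ = ∫ ω, Real.exp (s * X 0 ω) ∂μ := by
      rw [← integral_map (hmeas i).aemeasurable (hexpae i), hident i,
        integral_map (hmeas 0).aemeasurable (hexpae 0)]
    simpa [mgf, hM] using this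
  -- Φ v
  set Φ : ℕ → ENNReal := fun v =>
    μ {ω | d + ((v : ℝ) - 1) / R < ∑ i ∈ Finset.range (v + 1), X i ω} with hΦ
  -- Step 1: union bound
  have hceil : (N : ℝ) < R * (t - d) + 1 :=
    Nat.ceil_lt_add_one (mul_nonneg hR.le (sub_nonneg.mpr ht))
  have hstep1 : μ {ω | t < depart (fun n _ => (n : ℝ) / R) X N ω} ≤
      ∑ v ∈ Finset.range (N + 1),
        μ {ω | d + ((v : ℝ) - 1) / R < ∑ i ∈ Finset.range (v + 1), X (N - i) ω} := by
    refine le_trans (measure_mono ?_) (measure_biUnion_finset_le _ _)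
    intro ω hω
    simp only [Set.mem_setOf_eq, depart] at hω
    obtain ⟨v, hv, hsum⟩ := (Finset.lt_sup'_iff _).mp hω
    have hvN : v ≤ N := by simpa [Nat.lt_succ_iff] using Finset.mem_range.mp hv
    simp only [Set.mem_iUnion, Set.mem_setOf_eq]
    refine ⟨v, hv, ?_⟩
    have hcast : ((N - v : ℕ) : ℝ) = (N : ℝ) - v := by
      rw [Nat.cast_sub hvN]
    rw [hcast] at hsum
    have hA : ((N : ℝ) - v) / R + ((v : ℝ) - 1) / R = ((N : ℝ) - 1) / R := by
      rw [← add_div]; ring_nf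
    have h1 : ((N : ℝ) - 1) / R ≤ t - d := by
      rw [div_le_iff₀ hR]
      nlinarith
    nlinarith [hsum, hA, h1]
  -- Step 2: re-index the reversed sums
  have hstep2 : ∀ v ∈ Finset.range (N + 1),
      μ {ω | d + ((v : ℝ) - 1) / R < ∑ i ∈ Finset.range (v + 1), X (N - i) ω} = Φ v := by
    intro v hv
    have hvN : v ≤ N := by simpa [Nat.lt_succ_iff] using Finset.mem_range.mp hv
    set T : Finset ℕ := (Finset.range (v + 1)).image (fun i => N - i) with hT
    have hinj : Set.InjOn (fun i => N - i) (Finset.range (v + 1)) := by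
      intro a ha b hb hab
      simp only [Finset.coe_range, Set.mem_Iio] at ha hb
      have hab' : N - a = N - b := hab
      omega
    have hsumT : ∀ ω, ∑ i ∈ Finset.range (v + 1), X (N - i) ω = ∑ j ∈ T, X j ω := by
      intro ω
      rw [hT, Finset.sum_image]
      intro a ha b hb hab
      exact hinj (by simpa using ha) (by simpa using hb) hab
    have hcardT : T.card = v + 1 := by
      rw [hT, Finset.card_image_of_injOn hinj, Finset.card_range]
    calc μ {ω | d + ((v : ℝ) - 1) / R < ∑ i ∈ Finset.range (v + 1), X (N - i) ω}
        = μ {ω | d + ((v : ℝ) - 1) / R < ∑ j ∈ T, X j ω} := by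
          congr 1; ext ω; simp [hsumT ω]
      _ = μ {ω | d + ((v : ℝ) - 1) / R < ∑ i ∈ Finset.range T.card, X i ω} :=
          measure_sum_lt_eq hmeas hindep hident T _
      _ = Φ v := by rw [hcardT]
  have hsum1 : μ {ω | t < depart (fun n _ => (n : ℝ) / R) X N ω} ≤
      ∑ v ∈ Finset.range (N + 1), Φ v := by
    refine hstep1.trans (le_of_eq ?_)
    exact Finset.sum_congr rfl hstep2
  -- Chernoff bound for each v
  have hchern : ∀ v : ℕ, Φ v ≤
      ENNReal.ofReal (Real.exp (-s * (d - 1 / R)) * M * β ^ v) := by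
    intro v
    set c : ℝ := d + ((v : ℝ) - 1) / R with hc
    have hintS : Integrable (fun ω =>
        Real.exp (s * (∑ i ∈ Finset.range (v + 1), X i) ω)) μ :=
      hindep.integrable_exp_mul_sum hmeas fun i _ => hinti i
    have hcb := measure_ge_le_exp_mul_mgf (μ := μ) (X := ∑ i ∈ Finset.range (v + 1), X i)
      c hs.le hintS
    have hmgfS : mgf (∑ i ∈ Finset.range (v + 1), X i) μ s = M ^ (v + 1) := by
      rw [hindep.mgf_sum hmeas]
      rw [Finset.prod_congr rfl fun i _ => hmgf i, Finset.prod_const, Finset.card_range]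
    rw [hmgfS] at hcb
    have hsub : {ω | c < ∑ i ∈ Finset.range (v + 1), X i ω} ⊆
        {ω | c ≤ (∑ i ∈ Finset.range (v + 1), X i) ω} := by
      intro ω hω
      simp only [Set.mem_setOf_eq, Finset.sum_apply]
      exact le_of_lt hω
    have heq : Real.exp (-s * c) * M ^ (v + 1) =
        Real.exp (-s * (d - 1 / R)) * M * β ^ v := by
      rw [hβ, mul_pow, pow_succ]
      have : Real.exp (-s * c) =
          Real.exp (-s * (d - 1 / R)) * Real.exp (-(s / R)) ^ v := by
        rw [← Real.exp_nat_mul, ← Real.exp_add, hc]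
        congr 1
        field_simp
        ring
      rw [this]; ring
    calc Φ v ≤ μ {ω | c ≤ (∑ i ∈ Finset.range (v + 1), X i) ω} := measure_mono hsub
      _ = ENNReal.ofReal (μ {ω | c ≤ (∑ i ∈ Finset.range (v + 1), X i) ω}).toReal := by
          rw [ENNReal.ofReal_toReal (measure_ne_top μ _)]
      _ ≤ ENNReal.ofReal (Real.exp (-s * c) * M ^ (v + 1)) := ENNReal.ofReal_le_ofReal hcb
      _ = ENNReal.ofReal (Real.exp (-s * (d - 1 / R)) * M * β ^ v) := by rw [heq]
  -- tail bound
  have htail : ∀ n : ℕ, ∑ v ∈ Finset.Ico K n, Φ v ≤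
      ENNReal.ofReal ((Real.exp (-s * (d - 1 / R)) * M / (1 - β)) * β ^ K) := by
    intro n
    calc ∑ v ∈ Finset.Ico K n, Φ v
        ≤ ∑ v ∈ Finset.Ico K n,
            ENNReal.ofReal (Real.exp (-s * (d - 1 / R)) * M * β ^ v) :=
          Finset.sum_le_sum fun v _ => hchern v
      _ = ENNReal.ofReal (∑ v ∈ Finset.Ico K n,
            Real.exp (-s * (d - 1 / R)) * M * β ^ v) := by
          rw [ENNReal.ofReal_sum_of_nonneg]
          intro v _
          positivity
      _ ≤ ENNReal.ofReal ((Real.exp (-s * (d - 1 / R)) * M / (1 - β)) * β ^ K) := by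
          apply ENNReal.ofReal_le_ofReal
          rw [← Finset.mul_sum]
          have hg : ∑ v ∈ Finset.Ico K n, β ^ v ≤ β ^ K / (1 - β) :=
            geom_sum_Ico_le_of_lt_one hβpos.le hβlt
          calc Real.exp (-s * (d - 1 / R)) * M * ∑ v ∈ Finset.Ico K n, β ^ v
              ≤ Real.exp (-s * (d - 1 / R)) * M * (β ^ K / (1 - β)) := by
                apply mul_le_mul_of_nonneg_left hg
                positivity
            _ = (Real.exp (-s * (d - 1 / R)) * M / (1 - β)) * β ^ K := by ring
  -- combine
  refine hsum1.trans ?_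
  have hfinal : ∑ v ∈ Finset.range (N + 1), Φ v ≤
      (∑ v ∈ Finset.range K, Φ v) +
        ENNReal.ofReal ((Real.exp (-s * (d - 1 / R)) * M / (1 - β)) * β ^ K) := by
    rcases le_or_gt (N + 1) K with h | h
    · refine le_trans ?_ le_self_add
      exact Finset.sum_le_sum_of_subset (Finset.range_subset_range.mpr h)
    · have hsplit : ∑ v ∈ Finset.range (N + 1), Φ v =
          (∑ v ∈ Finset.range K, Φ v) + ∑ v ∈ Finset.Ico K (N + 1), Φ v := by
        rw [Finset.range_eq_Ico,
          ← Finset.sum_Ico_consecutive _ (Nat.zero_le K) (le_of_lt h), Finset.range_eq_Ico]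
      rw [hsplit]
      exact add_le_add_right (htail (N + 1)) _
  exact hfinal
end

section
/- Let (X1^i)_{i≥0} and (X2^i)_{i≥0} be two families of nonnegative real random variables, all mutually independent, with the X1^i identically distributed and the X2^i identically distributed. Let R > 0, d > 0, t ≥ d, n̂ = ⌈R(t-d)⌉, and define D1(n) = max_{0 ≤ v ≤ n} ( (n-v)/R + Σ_{i=0}^{v} X1^{n-i} ) and D2(n) = max_{0 ≤ v ≤ n} ( D1(n-v) + Σ_{i=0}^{v} X2^{n-i} ). Suppose s > 0 is such that M1(s) = E[e^{s X1^0}] and M2(s) = E[e^{s X2^0}] are finite and max(M1(s), M2(s)) < e^{s/R}, and set βk(s) = Mk(s) e^{-s/R} for k = 1, 2. Then P( D2(n̂) > t ) ≤ e^{-s(d - 1/R)} · M1(s) M2(s) / ( (1 - β1(s)) (1 - β2(s)) ). -/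
open MeasureTheory ProbabilityTheory


lemma my_geom_le {r : ℝ} (h0 : 0 ≤ r) (h1 : r < 1) (m : ℕ) :
    ∑ i ∈ Finset.range m, r ^ i ≤ (1 - r)⁻¹ := by
  have h := Summable.sum_le_tsum (Finset.range m) (fun i _ => pow_nonneg h0 i)
    (summable_geometric_of_lt_one h0 h1)
  rwa [tsum_geometric_of_lt_one h0 h1] at h

lemma my_chernoff_term {Ω : Type*} [MeasurableSpace Ω] (μ : Measure Ω) [IsProbabilityMeasure μ]
    (X1 X2 : ℕ → Ω → ℝ)
    (hmeas1 : ∀ i, Measurable (X1 i)) (hmeas2 : ∀ i, Measurable (X2 i))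
    (hindep : iIndepFun (Sum.elim X1 X2 : ℕ ⊕ ℕ → Ω → ℝ) μ)
    (hident1 : ∀ i, μ.map (X1 i) = μ.map (X1 0))
    (hident2 : ∀ i, μ.map (X2 i) = μ.map (X2 0))
    (t s : ℝ) (hs : 0 < s)
    (hint1 : Integrable (fun ω => Real.exp (s * X1 0 ω)) μ)
    (hint2 : Integrable (fun ω => Real.exp (s * X2 0 ω)) μ)
    (c : ℝ) (n v0 v1 : ℕ) (hv : v0 + v1 ≤ n) :
    μ {ω | t < c + ((∑ i ∈ Finset.range (v1+1), X1 (n - v0 - i) ω) +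
        ∑ i ∈ Finset.range (v0+1), X2 (n - i) ω)} ≤
      ENNReal.ofReal (Real.exp (-s * (t - c)) *
        ((∫ ω, Real.exp (s * X1 0 ω) ∂μ) ^ (v1+1) *
         (∫ ω, Real.exp (s * X2 0 ω) ∂μ) ^ (v0+1))) := by
  classical
  set Y : ℕ ⊕ ℕ → Ω → ℝ := Sum.elim X1 X2 with hY
  have hYmeas : ∀ k, Measurable (Y k) := by rintro (j|j); exacts [hmeas1 j, hmeas2 j]
  have gmeas : Measurable fun x : ℝ => Real.exp (s * x) :=
    (measurable_const.mul measurable_id).exp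
  set F1 : Finset (ℕ ⊕ ℕ) := (Finset.range (v1+1)).image (fun i => Sum.inl (n - v0 - i))
    with hF1
  set F2 : Finset (ℕ ⊕ ℕ) := (Finset.range (v0+1)).image (fun i => Sum.inr (n - i)) with hF2
  have hinj1 : ∀ x ∈ Finset.range (v1+1), ∀ y ∈ Finset.range (v1+1),
      (Sum.inl (n - v0 - x) : ℕ ⊕ ℕ) = Sum.inl (n - v0 - y) → x = y := by
    intro x hx y hy h
    simp only [Finset.mem_range] at hx hy
    simp only [Sum.inl.injEq] at h
    omega
  have hinj2 : ∀ x ∈ Finset.range (v0+1), ∀ y ∈ Finset.range (v0+1),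
      (Sum.inr (n - x) : ℕ ⊕ ℕ) = Sum.inr (n - y) → x = y := by
    intro x hx y hy h
    simp only [Finset.mem_range] at hx hy
    simp only [Sum.inr.injEq] at h
    omega
  have hdisj : Disjoint F1 F2 := by
    rw [Finset.disjoint_left]
    intro k hk1 hk2
    simp only [hF1, hF2, Finset.mem_image] at hk1 hk2
    obtain ⟨i, _, rfl⟩ := hk1
    obtain ⟨j, _, h⟩ := hk2
    cases h
  have hsum : ∀ ω, (∑ i ∈ Finset.range (v1+1), X1 (n - v0 - i) ω) +
      ∑ i ∈ Finset.range (v0+1), X2 (n - i) ω = (∑ k ∈ F1 ∪ F2, Y k) ω := by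
    intro ω
    rw [Finset.sum_apply, Finset.sum_union hdisj, Finset.sum_image hinj1,
      Finset.sum_image hinj2]
    rfl
  have hint1' : ∀ j, Integrable (fun ω => Real.exp (s * X1 j ω)) μ := by
    intro j
    have h : Integrable ((fun x => Real.exp (s * x)) ∘ X1 j) μ := by
      rw [← integrable_map_measure gmeas.aestronglyMeasurable (hmeas1 j).aemeasurable,
        hident1 j,
        integrable_map_measure gmeas.aestronglyMeasurable (hmeas1 0).aemeasurable]
      exact hint1
    exact h
  have hint2' : ∀ j, Integrable (fun ω => Real.exp (s * X2 j ω)) μ := by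
    intro j
    have h : Integrable ((fun x => Real.exp (s * x)) ∘ X2 j) μ := by
      rw [← integrable_map_measure gmeas.aestronglyMeasurable (hmeas2 j).aemeasurable,
        hident2 j,
        integrable_map_measure gmeas.aestronglyMeasurable (hmeas2 0).aemeasurable]
      exact hint2
    exact h
  have hmgf1 : ∀ j, mgf (X1 j) μ s = ∫ ω, Real.exp (s * X1 0 ω) ∂μ := by
    intro j
    rw [mgf, ← integral_map (hmeas1 j).aemeasurable gmeas.aestronglyMeasurable,
      hident1 j, integral_map (hmeas1 0).aemeasurable gmeas.aestronglyMeasurable]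
  have hmgf2 : ∀ j, mgf (X2 j) μ s = ∫ ω, Real.exp (s * X2 0 ω) ∂μ := by
    intro j
    rw [mgf, ← integral_map (hmeas2 j).aemeasurable gmeas.aestronglyMeasurable,
      hident2 j, integral_map (hmeas2 0).aemeasurable gmeas.aestronglyMeasurable]
  set T : Ω → ℝ := ∑ k ∈ F1 ∪ F2, Y k with hT
  have hTint : Integrable (fun ω => Real.exp (s * T ω)) μ := by
    refine hindep.integrable_exp_mul_sum hYmeas ?_
    rintro (j|j) _
    · exact hint1' j
    · exact hint2' j
  have hch := measure_ge_le_exp_mul_mgf (X := T) (μ := μ) (t := s) (t - c) hs.le hTint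
  have hmgfT : mgf T μ s = (∫ ω, Real.exp (s * X1 0 ω) ∂μ) ^ (v1+1) *
      (∫ ω, Real.exp (s * X2 0 ω) ∂μ) ^ (v0+1) := by
    rw [hT, hindep.mgf_sum hYmeas, Finset.prod_union hdisj, hF1, hF2,
      Finset.prod_image hinj1, Finset.prod_image hinj2]
    simp only [hY, Sum.elim_inl, Sum.elim_inr]
    rw [Finset.prod_congr rfl (fun i _ => hmgf1 (n - v0 - i)),
      Finset.prod_congr rfl (fun i _ => hmgf2 (n - i)),
      Finset.prod_const, Finset.prod_const, Finset.card_range, Finset.card_range]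
  calc μ {ω | t < c + ((∑ i ∈ Finset.range (v1+1), X1 (n - v0 - i) ω) +
        ∑ i ∈ Finset.range (v0+1), X2 (n - i) ω)}
      ≤ μ {ω | t - c ≤ T ω} := by
        refine measure_mono fun ω hω => ?_
        simp only [Set.mem_setOf_eq] at hω ⊢
        rw [← hsum ω]
        linarith
    _ = ENNReal.ofReal ((μ {ω | t - c ≤ T ω}).toReal) :=
        (ENNReal.ofReal_toReal (measure_ne_top _ _)).symm
    _ ≤ ENNReal.ofReal (Real.exp (-s * (t - c)) *
        ((∫ ω, Real.exp (s * X1 0 ω) ∂μ) ^ (v1+1) *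
         (∫ ω, Real.exp (s * X2 0 ω) ∂μ) ^ (v0+1))) := by
        refine ENNReal.ofReal_le_ofReal ?_
        rw [← hmgfT]
        exact hch

/-- Two-hop Chernoff upper bound: for the two-hop FCFS tandem with periodic arrivals, if
`max (M1(s), M2(s)) < e^{s/R}` then the violation probability of the system departure instant
of the tagged packet `n̂ = ⌈R(t-d)⌉` is at most
`Ψ₂(s,d,R) = e^{-s(d-1/R)} M1(s) M2(s) / ((1-β1(s))(1-β2(s)))`, `βk(s) = Mk(s) e^{-s/R}`. -/
theorem stmt13 {Ω : Type*} [MeasurableSpace Ω] (μ : Measure Ω) [IsProbabilityMeasure μ]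
    (X1 X2 : ℕ → Ω → ℝ)
    (hmeas1 : ∀ i, Measurable (X1 i)) (hmeas2 : ∀ i, Measurable (X2 i))
    (hnn1 : ∀ i ω, 0 ≤ X1 i ω) (hnn2 : ∀ i ω, 0 ≤ X2 i ω)
    (hindep : iIndepFun (Sum.elim X1 X2 : ℕ ⊕ ℕ → Ω → ℝ) μ)
    (hident1 : ∀ i, μ.map (X1 i) = μ.map (X1 0))
    (hident2 : ∀ i, μ.map (X2 i) = μ.map (X2 0))
    (R d t s : ℝ) (hR : 0 < R) (hd : 0 < d) (ht : d ≤ t) (hs : 0 < s)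
    (hint1 : Integrable (fun ω => Real.exp (s * X1 0 ω)) μ)
    (hint2 : Integrable (fun ω => Real.exp (s * X2 0 ω)) μ)
    (hlt : max (∫ ω, Real.exp (s * X1 0 ω) ∂μ) (∫ ω, Real.exp (s * X2 0 ω) ∂μ) <
      Real.exp (s / R)) :
    μ {ω | t < depart (depart (fun n _ => (n : ℝ) / R) X1) X2 ⌈R * (t - d)⌉₊ ω} ≤
      ENNReal.ofReal (Real.exp (-s * (d - 1 / R)) *
        (∫ ω, Real.exp (s * X1 0 ω) ∂μ) * (∫ ω, Real.exp (s * X2 0 ω) ∂μ) /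
        ((1 - (∫ ω, Real.exp (s * X1 0 ω) ∂μ) * Real.exp (-(s / R))) *
         (1 - (∫ ω, Real.exp (s * X2 0 ω) ∂μ) * Real.exp (-(s / R))))) := by
  classical
  set M1 := ∫ ω, Real.exp (s * X1 0 ω) ∂μ with hM1
  set M2 := ∫ ω, Real.exp (s * X2 0 ω) ∂μ with hM2
  set n := ⌈R * (t - d)⌉₊ with hn
  set β1 := M1 * Real.exp (-(s / R)) with hβ1
  set β2 := M2 * Real.exp (-(s / R)) with hβ2
  have hM1one : (1 : ℝ) ≤ M1 := by
    have : (1 : ℝ) = ∫ _ω, (1 : ℝ) ∂μ := by simp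
    rw [hM1, this]
    exact integral_mono (integrable_const 1) hint1
      (fun ω => Real.one_le_exp (mul_nonneg hs.le (hnn1 0 ω)))
  have hM2one : (1 : ℝ) ≤ M2 := by
    have : (1 : ℝ) = ∫ _ω, (1 : ℝ) ∂μ := by simp
    rw [hM2, this]
    exact integral_mono (integrable_const 1) hint2
      (fun ω => Real.one_le_exp (mul_nonneg hs.le (hnn2 0 ω)))
  have hM1pos : (0 : ℝ) < M1 := lt_of_lt_of_le one_pos hM1one
  have hM2pos : (0 : ℝ) < M2 := lt_of_lt_of_le one_pos hM2one
  have hβ1pos : (0 : ℝ) ≤ β1 := mul_nonneg hM1pos.le (Real.exp_pos _).le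
  have hβ2pos : (0 : ℝ) ≤ β2 := mul_nonneg hM2pos.le (Real.exp_pos _).le
  have hβ1lt : β1 < 1 := by
    have h1 := (max_lt_iff.mp hlt).1
    calc β1 = M1 * Real.exp (-(s / R)) := rfl
      _ < Real.exp (s / R) * Real.exp (-(s / R)) :=
          mul_lt_mul_of_pos_right h1 (Real.exp_pos _)
      _ = 1 := by rw [← Real.exp_add]; simp
  have hβ2lt : β2 < 1 := by
    have h2 := (max_lt_iff.mp hlt).2
    calc β2 = M2 * Real.exp (-(s / R)) := rfl
      _ < Real.exp (s / R) * Real.exp (-(s / R)) :=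
          mul_lt_mul_of_pos_right h2 (Real.exp_pos _)
      _ = 1 := by rw [← Real.exp_add]; simp
  -- the union bound
  have hsub : {ω | t < depart (depart (fun n _ => (n : ℝ) / R) X1) X2 n ω} ⊆
      ⋃ v0 ∈ Finset.range (n + 1), ⋃ v1 ∈ Finset.range (n - v0 + 1),
        {ω | t < ((n - v0 - v1 : ℕ) : ℝ) / R +
          ((∑ i ∈ Finset.range (v1 + 1), X1 (n - v0 - i) ω) +
           ∑ i ∈ Finset.range (v0 + 1), X2 (n - i) ω)} := by
    intro ω hω
    simp only [Set.mem_setOf_eq] at hω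
    obtain ⟨v0, hv0, hω⟩ := (Finset.lt_sup'_iff _).mp hω
    rw [← sub_lt_iff_lt_add] at hω
    obtain ⟨v1, hv1, hω⟩ := (Finset.lt_sup'_iff _).mp hω
    simp only [Finset.mem_range] at hv0 hv1
    refine Set.mem_iUnion₂.mpr ⟨v0, Finset.mem_range.mpr hv0,
      Set.mem_iUnion₂.mpr ⟨v1, Finset.mem_range.mpr hv1, ?_⟩⟩
    simp only [Set.mem_setOf_eq]
    have : (n - v0 - v1 : ℕ) = (n - v0) - v1 := rfl
    linarith [hω]
  refine (measure_mono hsub).trans ?_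
  refine (measure_biUnion_finset_le _ _).trans ?_
  have hstep : ∀ v0 ∈ Finset.range (n + 1),
      μ (⋃ v1 ∈ Finset.range (n - v0 + 1),
        {ω | t < ((n - v0 - v1 : ℕ) : ℝ) / R +
          ((∑ i ∈ Finset.range (v1 + 1), X1 (n - v0 - i) ω) +
           ∑ i ∈ Finset.range (v0 + 1), X2 (n - i) ω)}) ≤
      ∑ v1 ∈ Finset.range (n - v0 + 1),
        ENNReal.ofReal (Real.exp (-s * (t - ((n - v0 - v1 : ℕ) : ℝ) / R)) *
          (M1 ^ (v1 + 1) * M2 ^ (v0 + 1))) := by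
    intro v0 hv0
    refine (measure_biUnion_finset_le _ _).trans ?_
    refine Finset.sum_le_sum fun v1 hv1 => ?_
    simp only [Finset.mem_range] at hv0 hv1
    exact my_chernoff_term μ X1 X2 hmeas1 hmeas2 hindep hident1 hident2 t s hs hint1 hint2
      (((n - v0 - v1 : ℕ) : ℝ) / R) n v0 v1 (by omega)
  refine (Finset.sum_le_sum hstep).trans ?_
  have hofReal : ∀ v0 ∈ Finset.range (n + 1),
      (∑ v1 ∈ Finset.range (n - v0 + 1),
        ENNReal.ofReal (Real.exp (-s * (t - ((n - v0 - v1 : ℕ) : ℝ) / R)) *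
          (M1 ^ (v1 + 1) * M2 ^ (v0 + 1)))) =
      ENNReal.ofReal (∑ v1 ∈ Finset.range (n - v0 + 1),
        Real.exp (-s * (t - ((n - v0 - v1 : ℕ) : ℝ) / R)) *
          (M1 ^ (v1 + 1) * M2 ^ (v0 + 1))) := by
    intro v0 _
    rw [ENNReal.ofReal_sum_of_nonneg]
    intro v1 _
    exact mul_nonneg (Real.exp_nonneg _)
      (mul_nonneg (pow_nonneg hM1pos.le _) (pow_nonneg hM2pos.le _))
  rw [Finset.sum_congr rfl hofReal, ← ENNReal.ofReal_sum_of_nonneg (fun v0 _ =>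
    Finset.sum_nonneg fun v1 _ => mul_nonneg (Real.exp_nonneg _)
      (mul_nonneg (pow_nonneg hM1pos.le _) (pow_nonneg hM2pos.le _)))]
  refine ENNReal.ofReal_le_ofReal ?_
  -- now a purely real inequality
  have hterm_eq : ∀ v0 ∈ Finset.range (n + 1), ∀ v1 ∈ Finset.range (n - v0 + 1),
      Real.exp (-s * (t - ((n - v0 - v1 : ℕ) : ℝ) / R)) * (M1 ^ (v1 + 1) * M2 ^ (v0 + 1)) =
      (Real.exp (-s * (t - (n : ℝ) / R)) * M1 * M2) * (β1 ^ v1 * β2 ^ v0) := by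
    intro v0 hv0 v1 hv1
    simp only [Finset.mem_range] at hv0 hv1
    have hcast : ((n - v0 - v1 : ℕ) : ℝ) = (n : ℝ) - v0 - v1 := by
      rw [Nat.cast_sub (by omega), Nat.cast_sub (by omega)]
    have hexp : Real.exp (-s * (t - ((n : ℝ) - v0 - v1) / R)) =
        Real.exp (-s * (t - (n : ℝ) / R)) * Real.exp (-(s / R)) ^ v1 *
          Real.exp (-(s / R)) ^ v0 := by
      rw [← Real.exp_nat_mul, ← Real.exp_nat_mul, ← Real.exp_add, ← Real.exp_add]
      congr 1
      field_simp
      ring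
    rw [hcast, hexp, hβ1, hβ2, mul_pow, mul_pow, pow_succ, pow_succ]
    ring
  rw [Finset.sum_congr rfl (fun v0 hv0 => Finset.sum_congr rfl (hterm_eq v0 hv0))]
  have hC : Real.exp (-s * (t - (n : ℝ) / R)) ≤ Real.exp (-s * (d - 1 / R)) := by
    have h0 : (0 : ℝ) ≤ R * (t - d) := mul_nonneg hR.le (by linarith)
    have hceil : (n : ℝ) ≤ R * (t - d) + 1 := (Nat.ceil_lt_add_one h0).le
    have hinv : (1 / R) * R = 1 := by field_simp
    have hdivR : (n : ℝ) / R ≤ t - d + 1 / R := by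
      rw [div_le_iff₀ hR]
      nlinarith
    exact Real.exp_le_exp.mpr (by nlinarith)
  calc ∑ v0 ∈ Finset.range (n + 1), ∑ v1 ∈ Finset.range (n - v0 + 1),
        (Real.exp (-s * (t - (n : ℝ) / R)) * M1 * M2) * (β1 ^ v1 * β2 ^ v0)
      = (Real.exp (-s * (t - (n : ℝ) / R)) * M1 * M2) *
        ∑ v0 ∈ Finset.range (n + 1), β2 ^ v0 *
          ∑ v1 ∈ Finset.range (n - v0 + 1), β1 ^ v1 := by
        rw [Finset.mul_sum]
        refine Finset.sum_congr rfl fun v0 _ => ?_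
        rw [Finset.mul_sum, Finset.mul_sum]
        refine Finset.sum_congr rfl fun v1 _ => ?_
        ring
    _ ≤ (Real.exp (-s * (t - (n : ℝ) / R)) * M1 * M2) *
        ∑ v0 ∈ Finset.range (n + 1), β2 ^ v0 * (1 - β1)⁻¹ := by
        refine mul_le_mul_of_nonneg_left (Finset.sum_le_sum fun v0 _ => ?_)
          (by positivity)
        exact mul_le_mul_of_nonneg_left (my_geom_le hβ1pos hβ1lt _) (pow_nonneg hβ2pos _)
    _ = (Real.exp (-s * (t - (n : ℝ) / R)) * M1 * M2) * (1 - β1)⁻¹ *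
        ∑ v0 ∈ Finset.range (n + 1), β2 ^ v0 := by
        rw [← Finset.sum_mul]
        ring
    _ ≤ (Real.exp (-s * (t - (n : ℝ) / R)) * M1 * M2) * (1 - β1)⁻¹ * (1 - β2)⁻¹ := by
        refine mul_le_mul_of_nonneg_left (my_geom_le hβ2pos hβ2lt _) ?_
        have h1 : (0 : ℝ) ≤ (1 - β1)⁻¹ := inv_nonneg.mpr (by linarith)
        positivity
    _ ≤ (Real.exp (-s * (d - 1 / R)) * M1 * M2) * (1 - β1)⁻¹ * (1 - β2)⁻¹ := by
        have h1 : (0 : ℝ) ≤ (1 - β1)⁻¹ := inv_nonneg.mpr (by linarith)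
        have h2 : (0 : ℝ) ≤ (1 - β2)⁻¹ := inv_nonneg.mpr (by linarith)
        refine mul_le_mul_of_nonneg_right (mul_le_mul_of_nonneg_right ?_ h1) h2
        exact mul_le_mul_of_nonneg_right (mul_le_mul_of_nonneg_right hC hM1pos.le) hM2pos.le
    _ = Real.exp (-s * (d - 1 / R)) * M1 * M2 / ((1 - β1) * (1 - β2)) := by
        have h1 : (1 : ℝ) - β1 ≠ 0 := by linarith
        have h2 : (1 : ℝ) - β2 ≠ 0 := by linarith
        field_simp
end

section
/- Let s > 0, m1 > 0, m2 > 0 and d ∈ ℝ. The function T ↦ e^{-s d} · m1 m2 · e^{3 s T} / ( (e^{s T} - m1)(e^{s T} - m2) ), defined on the open interval ( (ln max(m1, m2))/s, ∞ ) (where e^{sT} > m1 and e^{sT} > m2), is convex. -/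
open Real Set

/-- Pointwise congruence on the set preserves convexity. -/
lemma convexOn_congr' {s : Set ℝ} {f g : ℝ → ℝ} (h : ConvexOn ℝ s f)
    (he : ∀ x ∈ s, f x = g x) : ConvexOn ℝ s g := by
  refine ⟨h.1, fun x hx y hy a b ha hb hab => ?_⟩
  rw [← he _ (h.1 hx hy ha hb hab), ← he x hx, ← he y hy]
  exact h.2 hx hy ha hb hab

/-- Composition of a convex monotone function with a convex function. -/
lemma convexOn_comp' {s t : Set ℝ} {f g : ℝ → ℝ} (hg : ConvexOn ℝ t g)
    (hmono : MonotoneOn g t) (hf : ConvexOn ℝ s f) (hmaps : ∀ x ∈ s, f x ∈ t) :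
    ConvexOn ℝ s (fun x => g (f x)) := by
  refine ⟨hf.1, fun x hx y hy a b ha hb hab => ?_⟩
  have hfx := hmaps x hx
  have hfy := hmaps y hy
  have hmem : a • f x + b • f y ∈ t := hg.1 hfx hfy ha hb hab
  have hmem2 : f (a • x + b • y) ∈ t := hmaps _ (hf.1 hx hy ha hb hab)
  calc g (f (a • x + b • y)) ≤ g (a • f x + b • f y) :=
        hmono hmem2 hmem (hf.2 hx hy ha hb hab)
    _ ≤ a • g (f x) + b • g (f y) := hg.2 hfx hfy ha hb hab

/-- `y ↦ -log (1 - y)` is convex on `(-∞, 1)`. -/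
lemma convexOn_neg_log_one_sub : ConvexOn ℝ (Iio (1 : ℝ)) (fun y => -Real.log (1 - y)) := by
  refine ⟨convex_Iio _, fun x hx y hy a b ha hb hab => ?_⟩
  have hx' : (0 : ℝ) < 1 - x := sub_pos.mpr (mem_Iio.mp hx)
  have hy' : (0 : ℝ) < 1 - y := sub_pos.mpr (mem_Iio.mp hy)
  have := strictConcaveOn_log_Ioi.concaveOn.2 (mem_Ioi.mpr hx') (mem_Ioi.mpr hy')
    ha hb hab
  dsimp only
  simp only [smul_eq_mul] at this ⊢
  have heq : a * (1 - x) + b * (1 - y) = 1 - (a * x + b * y) := by linear_combination hab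
  rw [heq] at this
  linarith

/-- `y ↦ -log (1 - y)` is monotone on `(-∞, 1)`. -/
lemma monotoneOn_neg_log_one_sub : MonotoneOn (fun y => -Real.log (1 - y)) (Iio (1 : ℝ)) := by
  intro x hx y hy hxy
  have hy' : (0 : ℝ) < 1 - y := sub_pos.mpr (mem_Iio.mp hy)
  have : Real.log (1 - y) ≤ Real.log (1 - x) := Real.log_le_log hy' (by linarith)
  simpa using this

/-- `T ↦ m * exp (-(s * T))` is convex. -/
lemma convexOn_m_exp_neg (s m : ℝ) (hm : 0 ≤ m) (S : Set ℝ) (hS : Convex ℝ S) :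
    ConvexOn ℝ S (fun T => m * Real.exp (-(s * T))) := by
  have h1 : ConvexOn ℝ (univ : Set ℝ) (fun T : ℝ => Real.exp (-(s * T))) := by
    have := convexOn_exp.comp_linearMap ((-s) • (LinearMap.id : ℝ →ₗ[ℝ] ℝ))
    simpa [Function.comp_def, neg_mul, Pi.neg_apply, Pi.smul_apply, smul_eq_mul] using this
  have h2 := (h1.subset (subset_univ S) hS).smul hm
  simpa [smul_eq_mul] using h2

/-- The two-hop Chernoff upper bound, written in the inter-arrival time `T = 1/R` as
`Ψ₂(s,d,T) = e^{-sd} · m1 m2 · e^{3sT} / ((e^{sT} - m1)(e^{sT} - m2))` with `mk = Mk(s)`,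
is convex in `T` on the region where `e^{sT} > m1` and `e^{sT} > m2`. -/
theorem stmt15 (s m1 m2 d : ℝ) (hs : 0 < s) (hm1 : 0 < m1) (hm2 : 0 < m2) :
    ConvexOn ℝ (Set.Ioi (Real.log (max m1 m2) / s))
      (fun T => Real.exp (-s * d) * (m1 * m2) * Real.exp (3 * s * T) /
        ((Real.exp (s * T) - m1) * (Real.exp (s * T) - m2))) := by
  set S : Set ℝ := Set.Ioi (Real.log (max m1 m2) / s) with hSdef
  have hSconv : Convex ℝ S := convex_Ioi _
  -- basic facts on the set
  have hxgt : ∀ T ∈ S, m1 < Real.exp (s * T) ∧ m2 < Real.exp (s * T) := by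
    intro T hT
    have h1 : Real.log (max m1 m2) < s * T := by
      have := (div_lt_iff₀ hs).mp (mem_Ioi.mp hT)
      linarith
    have hmaxpos : 0 < max m1 m2 := lt_max_of_lt_left hm1
    have h2 : max m1 m2 < Real.exp (s * T) := by
      calc max m1 m2 = Real.exp (Real.log (max m1 m2)) := (Real.exp_log hmaxpos).symm
        _ < Real.exp (s * T) := Real.exp_lt_exp.mpr h1
    exact ⟨lt_of_le_of_lt (le_max_left _ _) h2, lt_of_le_of_lt (le_max_right _ _) h2⟩
  -- the inner functions map into Iio 1
  have hmapsto : ∀ (m : ℝ), 0 < m → (∀ T ∈ S, m < Real.exp (s * T)) →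
      ∀ T ∈ S, m * Real.exp (-(s * T)) ∈ Iio (1 : ℝ) := by
    intro m hm hlt T hT
    have hx : m < Real.exp (s * T) := hlt T hT
    have hxpos : 0 < Real.exp (s * T) := Real.exp_pos _
    rw [mem_Iio, Real.exp_neg]
    rw [mul_inv_lt_iff₀ hxpos] -- m * (exp (s*T))⁻¹ < 1 ↔ m < 1 * exp (s*T) ?
    linarith
  -- the log of the target function
  set G : ℝ → ℝ := fun T => ((-s * d + Real.log (m1 * m2)) + s * T) +
      ((-Real.log (1 - m1 * Real.exp (-(s * T)))) +
       (-Real.log (1 - m2 * Real.exp (-(s * T))))) with hGdef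
  have hGconv : ConvexOn ℝ S G := by
    have haff : ConvexOn ℝ S (fun T => (-s * d + Real.log (m1 * m2)) + s * T) := by
      refine ⟨hSconv, fun x _ y _ a b ha hb hab => le_of_eq ?_⟩
      have hb1 : b = 1 - a := by linarith
      subst hb1
      simp only [smul_eq_mul]
      ring
    have hc1 : ConvexOn ℝ S (fun T => -Real.log (1 - m1 * Real.exp (-(s * T)))) :=
      convexOn_comp' (g := fun y => -Real.log (1 - y)) convexOn_neg_log_one_sub
        monotoneOn_neg_log_one_sub
        (convexOn_m_exp_neg s m1 hm1.le S hSconv)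
        (hmapsto m1 hm1 (fun T hT => (hxgt T hT).1))
    have hc2 : ConvexOn ℝ S (fun T => -Real.log (1 - m2 * Real.exp (-(s * T)))) :=
      convexOn_comp' (g := fun y => -Real.log (1 - y)) convexOn_neg_log_one_sub
        monotoneOn_neg_log_one_sub
        (convexOn_m_exp_neg s m2 hm2.le S hSconv)
        (hmapsto m2 hm2 (fun T hT => (hxgt T hT).2))
    have := haff.add (hc1.add hc2)
    simpa [hGdef, Pi.add_def] using this
  -- exp ∘ G is convex
  have hexpG : ConvexOn ℝ S (fun T => Real.exp (G T)) :=
    convexOn_comp' convexOn_exp (Real.exp_monotone.monotoneOn _) hGconv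
      (fun x _ => mem_univ _)
  -- and equals the target on S
  refine convexOn_congr' hexpG ?_
  intro T hT
  obtain ⟨h1, h2⟩ := hxgt T hT
  have hxpos : 0 < Real.exp (s * T) := Real.exp_pos _
  have hd1 : 0 < Real.exp (s * T) - m1 := by linarith
  have hd2 : 0 < Real.exp (s * T) - m2 := by linarith
  have he1 : (1 : ℝ) - m1 * Real.exp (-(s * T)) = (Real.exp (s * T) - m1) / Real.exp (s * T) := by
    rw [Real.exp_neg]; field_simp
  have he2 : (1 : ℝ) - m2 * Real.exp (-(s * T)) = (Real.exp (s * T) - m2) / Real.exp (s * T) := by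
    rw [Real.exp_neg]; field_simp
  have hpos1 : (0 : ℝ) < (Real.exp (s * T) - m1) / Real.exp (s * T) := div_pos hd1 hxpos
  have hpos2 : (0 : ℝ) < (Real.exp (s * T) - m2) / Real.exp (s * T) := div_pos hd2 hxpos
  have hGval : G T = (-s * d + Real.log (m1 * m2)) + s * T
      - Real.log ((Real.exp (s * T) - m1) / Real.exp (s * T))
      - Real.log ((Real.exp (s * T) - m2) / Real.exp (s * T)) := by
    simp only [hGdef, he1, he2]; ring
  rw [hGval]
  rw [show (-s * d + Real.log (m1 * m2)) + s * T
      - Real.log ((Real.exp (s * T) - m1) / Real.exp (s * T))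
      - Real.log ((Real.exp (s * T) - m2) / Real.exp (s * T))
      = (-s * d) + (Real.log (m1 * m2) + (s * T +
        ((-Real.log ((Real.exp (s * T) - m1) / Real.exp (s * T))) +
         (-Real.log ((Real.exp (s * T) - m2) / Real.exp (s * T)))))) by ring]
  rw [Real.exp_add, Real.exp_add, Real.exp_add, Real.exp_add,
    Real.exp_log (mul_pos hm1 hm2), Real.exp_neg, Real.exp_neg,
    Real.exp_log hpos1, Real.exp_log hpos2]
  have hx3 : Real.exp (3 * s * T) = Real.exp (s * T) * Real.exp (s * T) * Real.exp (s * T) := by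
    rw [← Real.exp_add, ← Real.exp_add]; ring_nf
  rw [hx3]
  field_simp
end

section
/- Let (X1^i)_{i≥0} and (X2^i)_{i≥0} be two families of nonnegative real random variables, all mutually independent, with the X1^i identically distributed and the X2^i identically distributed. Let R > 0, d > 0, t ≥ d, n̂ = ⌈R(t-d)⌉, and define D1(n) = max_{0 ≤ v ≤ n} ( (n-v)/R + Σ_{i=0}^{v} X1^{n-i} ) and D2(n) = max_{0 ≤ v ≤ n} ( D1(n-v) + Σ_{i=0}^{v} X2^{n-i} ). Suppose s > 0 satisfies max(M1(s), M2(s)) < e^{s/R} with M1(s) = E[e^{s X1^0}], M2(s) = E[e^{s X2^0}] finite, and set βk(s) = Mk(s) e^{-s/R}. Then for every integer K ≥ 1, P( D2(n̂) > t ) ≤ Σ_{v0=0}^{K-1} Σ_{v1=0}^{K-1} P( Σ_{i=0}^{v1} X1^i + Σ_{i=0}^{v0} X2^i > d + (v0+v1-1)/R ) + e^{-s(d - 1/R)} M1(s) M2(s) · ( β1^K(s) + β2^K(s) - β1^K(s) β2^K(s) ) / ( (1 - β1(s))(1 - β2(s)) ). -/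
open MeasureTheory ProbabilityTheory

lemma map_add_of_indepFun {Ω : Type*} [MeasurableSpace Ω] {μ : Measure Ω} [IsFiniteMeasure μ]
    {A B : Ω → ℝ} (hA : Measurable A) (hB : Measurable B) (h : IndepFun A B μ) :
    μ.map (fun ω => A ω + B ω) =
      ((μ.map A).prod (μ.map B)).map (fun p : ℝ × ℝ => p.1 + p.2) := by
  rw [← (indepFun_iff_map_prod_eq_prod_map_map hA.aemeasurable hB.aemeasurable).1 h,
    Measure.map_map measurable_add (hA.prodMk hB)]
  rfl

lemma map_sum_congr_of_iIndepFun {Ω ι : Type*} [MeasurableSpace Ω] {μ : Measure Ω}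
    [IsProbabilityMeasure μ] {Y : ι → Ω → ℝ}
    (hindep : iIndepFun Y μ) (hmeas : ∀ i, Measurable (Y i))
    (g : ι → ι) (T : Finset ι) (hg : Set.InjOn g T)
    (hid : ∀ i ∈ T, μ.map (Y (g i)) = μ.map (Y i)) :
    μ.map (fun ω => ∑ i ∈ T, Y (g i) ω) = μ.map (fun ω => ∑ i ∈ T, Y i ω) := by
  classical
  induction T using Finset.induction_on with
  | empty => simp
  | @insert a T haT ih =>
    have hgT : Set.InjOn g T := hg.mono (by simp [Finset.coe_insert, Set.subset_insert])
    have hidT : ∀ i ∈ T, μ.map (Y (g i)) = μ.map (Y i) := fun i hi =>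
      hid i (Finset.mem_insert_of_mem hi)
    have hga : g a ∉ T.image g := by
      simp only [Finset.mem_image, not_exists, not_and]
      intro b hb hba
      have : b = a := hg (by simp [hb]) (by simp) hba
      exact haT (this ▸ hb)
    have mT1 : Measurable (fun ω => ∑ i ∈ T, Y (g i) ω) :=
      Finset.measurable_sum T (fun i _ => hmeas (g i))
    have mT2 : Measurable (fun ω => ∑ i ∈ T, Y i ω) :=
      Finset.measurable_sum T (fun i _ => hmeas i)
    have h1 : IndepFun (Y (g a)) (fun ω => ∑ i ∈ T, Y (g i) ω) μ := by
      have h1' := (hindep.indepFun_finset_sum_of_notMem hmeas hga).symm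
      have he : (∑ j ∈ T.image g, Y j) = fun ω => ∑ i ∈ T, Y (g i) ω := by
        rw [Finset.sum_image (fun x hx y hy hxy => hgT hx hy hxy)]
        funext ω; simp
      rwa [he] at h1'
    have h2 : IndepFun (Y a) (fun ω => ∑ i ∈ T, Y i ω) μ := by
      have h2' := (hindep.indepFun_finset_sum_of_notMem hmeas haT).symm
      have he : (∑ j ∈ T, Y j) = fun ω => ∑ i ∈ T, Y i ω := by funext ω; simp
      rwa [he] at h2'
    simp only [Finset.sum_insert haT]
    calc μ.map (fun ω => Y (g a) ω + ∑ i ∈ T, Y (g i) ω)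
        = ((μ.map (Y (g a))).prod (μ.map (fun ω => ∑ i ∈ T, Y (g i) ω))).map
            (fun p : ℝ × ℝ => p.1 + p.2) := map_add_of_indepFun (hmeas _) mT1 h1
      _ = ((μ.map (Y a)).prod (μ.map (fun ω => ∑ i ∈ T, Y i ω))).map
            (fun p : ℝ × ℝ => p.1 + p.2) := by
          rw [hid a (Finset.mem_insert_self a T), ih hgT hidT]
      _ = μ.map (fun ω => Y a ω + ∑ i ∈ T, Y i ω) :=
          (map_add_of_indepFun (hmeas a) mT2 h2).symm


set_option maxHeartbeats 2000000 in
/-- The two-hop α-relaxed upper bound: the `K × K` leading block of the union-bound double sum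
is kept exactly and the tail regions are bounded via Chernoff bounds, giving
`P(D₂(n̂) > t) ≤ Σ_{v0<K} Σ_{v1<K} Φ(v0,v1,R)
  + e^{-s(d-1/R)} M1(s) M2(s) (β1^K + β2^K - β1^K β2^K) / ((1-β1)(1-β2))`. -/
theorem stmt17 {Ω : Type*} [MeasurableSpace Ω] (μ : Measure Ω) [IsProbabilityMeasure μ]
    (X1 X2 : ℕ → Ω → ℝ)
    (hmeas1 : ∀ i, Measurable (X1 i)) (hmeas2 : ∀ i, Measurable (X2 i))
    (hnn1 : ∀ i ω, 0 ≤ X1 i ω) (hnn2 : ∀ i ω, 0 ≤ X2 i ω)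
    (hindep : iIndepFun (Sum.elim X1 X2 : ℕ ⊕ ℕ → Ω → ℝ) μ)
    (hident1 : ∀ i, μ.map (X1 i) = μ.map (X1 0))
    (hident2 : ∀ i, μ.map (X2 i) = μ.map (X2 0))
    (R d t s : ℝ) (hR : 0 < R) (hd : 0 < d) (ht : d ≤ t) (hs : 0 < s)
    (hint1 : Integrable (fun ω => Real.exp (s * X1 0 ω)) μ)
    (hint2 : Integrable (fun ω => Real.exp (s * X2 0 ω)) μ)
    (hlt : max (∫ ω, Real.exp (s * X1 0 ω) ∂μ) (∫ ω, Real.exp (s * X2 0 ω) ∂μ) <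
      Real.exp (s / R))
    (K : ℕ) (hK : 1 ≤ K) :
    μ {ω | t < depart (depart (fun n _ => (n : ℝ) / R) X1) X2 ⌈R * (t - d)⌉₊ ω} ≤
      (∑ v0 ∈ Finset.range K, ∑ v1 ∈ Finset.range K,
        μ {ω | d + ((v0 : ℝ) + (v1 : ℝ) - 1) / R <
          (∑ i ∈ Finset.range (v1 + 1), X1 i ω) +
          (∑ i ∈ Finset.range (v0 + 1), X2 i ω)}) +
      ENNReal.ofReal (Real.exp (-s * (d - 1 / R)) *
        (∫ ω, Real.exp (s * X1 0 ω) ∂μ) * (∫ ω, Real.exp (s * X2 0 ω) ∂μ) *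
        ((((∫ ω, Real.exp (s * X1 0 ω) ∂μ) * Real.exp (-(s / R))) ^ K +
          ((∫ ω, Real.exp (s * X2 0 ω) ∂μ) * Real.exp (-(s / R))) ^ K -
          ((∫ ω, Real.exp (s * X1 0 ω) ∂μ) * Real.exp (-(s / R))) ^ K *
          ((∫ ω, Real.exp (s * X2 0 ω) ∂μ) * Real.exp (-(s / R))) ^ K) /
         ((1 - (∫ ω, Real.exp (s * X1 0 ω) ∂μ) * Real.exp (-(s / R))) *
          (1 - (∫ ω, Real.exp (s * X2 0 ω) ∂μ) * Real.exp (-(s / R)))))) := by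
  classical
  set nh := ⌈R * (t - d)⌉₊ with hnh
  set M1 := ∫ ω, Real.exp (s * X1 0 ω) ∂μ with hM1def
  set M2 := ∫ ω, Real.exp (s * X2 0 ω) ∂μ with hM2def
  set β1 := M1 * Real.exp (-(s / R)) with hβ1def
  set β2 := M2 * Real.exp (-(s / R)) with hβ2def
  set C := Real.exp (-s * (d - 1 / R)) * M1 * M2 with hCdef
  set φ := (β1 ^ K + β2 ^ K - β1 ^ K * β2 ^ K) / ((1 - β1) * (1 - β2)) with hφdef
  set N := max (nh + 1) K with hN
  have hYmeas : ∀ j : ℕ ⊕ ℕ, Measurable (Sum.elim X1 X2 j) := by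
    rintro (i | i)
    · exact hmeas1 i
    · exact hmeas2 i
  have hc : Continuous fun x : ℝ => Real.exp (s * x) :=
    Real.continuous_exp.comp (continuous_const.mul continuous_id)
  -- transfers of integrability and mgf values
  have hint1' : ∀ i, Integrable (fun ω => Real.exp (s * X1 i ω)) μ := by
    intro i
    have h0 : Integrable (fun x : ℝ => Real.exp (s * x)) (μ.map (X1 i)) := by
      rw [hident1 i, integrable_map_measure hc.aestronglyMeasurable (hmeas1 0).aemeasurable]
      exact hint1
    exact (integrable_map_measure hc.aestronglyMeasurable (hmeas1 i).aemeasurable).mp h0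
  have hint2' : ∀ i, Integrable (fun ω => Real.exp (s * X2 i ω)) μ := by
    intro i
    have h0 : Integrable (fun x : ℝ => Real.exp (s * x)) (μ.map (X2 i)) := by
      rw [hident2 i, integrable_map_measure hc.aestronglyMeasurable (hmeas2 0).aemeasurable]
      exact hint2
    exact (integrable_map_measure hc.aestronglyMeasurable (hmeas2 i).aemeasurable).mp h0
  have hmgf1 : ∀ i, mgf (X1 i) μ s = M1 := by
    intro i
    show (∫ ω, Real.exp (s * X1 i ω) ∂μ) = M1
    rw [← integral_map (hmeas1 i).aemeasurable hc.aestronglyMeasurable, hident1 i,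
      integral_map (hmeas1 0).aemeasurable hc.aestronglyMeasurable]
  have hmgf2 : ∀ i, mgf (X2 i) μ s = M2 := by
    intro i
    show (∫ ω, Real.exp (s * X2 i ω) ∂μ) = M2
    rw [← integral_map (hmeas2 i).aemeasurable hc.aestronglyMeasurable, hident2 i,
      integral_map (hmeas2 0).aemeasurable hc.aestronglyMeasurable]
  have hM1pos : 0 < M1 := by
    rw [hM1def]; exact integral_exp_pos hint1
  have hM2pos : 0 < M2 := by
    rw [hM2def]; exact integral_exp_pos hint2
  have hβ1nn : 0 ≤ β1 := mul_nonneg hM1pos.le (Real.exp_nonneg _)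
  have hβ2nn : 0 ≤ β2 := mul_nonneg hM2pos.le (Real.exp_nonneg _)
  have hβ1lt : β1 < 1 := by
    have h1 : M1 < Real.exp (s / R) := (max_lt_iff.mp hlt).1
    calc β1 < Real.exp (s / R) * Real.exp (-(s / R)) := by
          exact mul_lt_mul_of_pos_right h1 (Real.exp_pos _)
      _ = 1 := by rw [← Real.exp_add]; simp
  have hβ2lt : β2 < 1 := by
    have h2 : M2 < Real.exp (s / R) := (max_lt_iff.mp hlt).2
    calc β2 < Real.exp (s / R) * Real.exp (-(s / R)) := by
          exact mul_lt_mul_of_pos_right h2 (Real.exp_pos _)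
      _ = 1 := by rw [← Real.exp_add]; simp
  have hCnn : 0 ≤ C := by positivity

  -- the base sum over a finset of ℕ ⊕ ℕ
  have hdisj : ∀ v0 v1 : ℕ, Disjoint ((Finset.range (v1 + 1)).image Sum.inl)
      ((Finset.range (v0 + 1)).image Sum.inr) := by
    intro v0 v1
    simp [Finset.disjoint_left]
  have hsumT : ∀ v0 v1 : ℕ, ∀ (Z : ℕ ⊕ ℕ → Ω → ℝ) (ω : Ω),
      ∑ j ∈ ((Finset.range (v1 + 1)).image Sum.inl ∪ (Finset.range (v0 + 1)).image Sum.inr),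
        Z j ω =
      (∑ i ∈ Finset.range (v1 + 1), Z (Sum.inl i) ω) +
        ∑ i ∈ Finset.range (v0 + 1), Z (Sum.inr i) ω := by
    intro v0 v1 Z ω
    rw [Finset.sum_union (hdisj v0 v1), Finset.sum_image (by simp), Finset.sum_image (by simp)]
  have hchern : ∀ v0 v1 : ℕ,
      μ {ω | d + ((v0 : ℝ) + (v1 : ℝ) - 1) / R <
          (∑ i ∈ Finset.range (v1 + 1), X1 i ω) + (∑ i ∈ Finset.range (v0 + 1), X2 i ω)} ≤
        ENNReal.ofReal (C * (β1 ^ v1 * β2 ^ v0)) := by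
    intro v0 v1
    set c := d + ((v0 : ℝ) + (v1 : ℝ) - 1) / R with hcdef
    set W : Ω → ℝ := fun ω =>
      (∑ i ∈ Finset.range (v1 + 1), X1 i ω) + (∑ i ∈ Finset.range (v0 + 1), X2 i ω) with hWdef
    set T : Finset (ℕ ⊕ ℕ) :=
      (Finset.range (v1 + 1)).image Sum.inl ∪ (Finset.range (v0 + 1)).image Sum.inr with hTdef
    have hWT : (∑ j ∈ T, Sum.elim X1 X2 j) = W := by
      funext ω
      rw [Finset.sum_apply]
      exact hsumT v0 v1 _ ω
    have hInt : Integrable (fun ω => Real.exp (s * W ω)) μ := by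
      have h := hindep.integrable_exp_mul_sum (t := s) hYmeas (s := T) ?_
      · rwa [hWT] at h
      · rintro (i | i) _
        · exact hint1' i
        · exact hint2' i
    have hmgfW : mgf W μ s = M1 ^ (v1 + 1) * M2 ^ (v0 + 1) := by
      rw [← hWT, hindep.mgf_sum hYmeas T, hTdef,
        Finset.prod_union (hdisj v0 v1), Finset.prod_image (by simp), Finset.prod_image (by simp)]
      simp only [Sum.elim_inl, Sum.elim_inr]
      rw [Finset.prod_congr rfl (fun i _ => hmgf1 i), Finset.prod_congr rfl (fun i _ => hmgf2 i),
        Finset.prod_const, Finset.prod_const, Finset.card_range, Finset.card_range]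
    have htoReal := measure_ge_le_exp_mul_mgf (μ := μ) (X := W) (t := s) c hs.le hInt
    calc μ {ω | c < W ω} ≤ μ {ω | c ≤ W ω} :=
          measure_mono (fun ω (h : c < W ω) => le_of_lt h)
      _ = ENNReal.ofReal ((μ {ω | c ≤ W ω}).toReal) :=
          (ENNReal.ofReal_toReal (measure_ne_top _ _)).symm
      _ ≤ ENNReal.ofReal (Real.exp (-s * c) * mgf W μ s) := ENNReal.ofReal_le_ofReal htoReal
      _ = ENNReal.ofReal (C * (β1 ^ v1 * β2 ^ v0)) := by
          rw [hmgfW]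
          congr 1
          have hexp : Real.exp (-s * c) = Real.exp (-s * (d - 1 / R)) *
              ((Real.exp (-(s / R))) ^ v1 * (Real.exp (-(s / R))) ^ v0) := by
            rw [← Real.exp_nat_mul, ← Real.exp_nat_mul, ← Real.exp_add, ← Real.exp_add]
            congr 1
            rw [hcdef]
            field_simp
            ring
          rw [hexp, hCdef, hβ1def, hβ2def]
          ring

  -- shifted sums have the same law as base sums
  have hAB : ∀ v0 v1 : ℕ, v0 ≤ nh → v1 ≤ nh - v0 →
      μ {ω | d + ((v0 : ℝ) + (v1 : ℝ) - 1) / R <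
          (∑ i ∈ Finset.range (v1 + 1), X1 (nh - v0 - i) ω) +
            ∑ i ∈ Finset.range (v0 + 1), X2 (nh - i) ω} =
      μ {ω | d + ((v0 : ℝ) + (v1 : ℝ) - 1) / R <
          (∑ i ∈ Finset.range (v1 + 1), X1 i ω) +
            ∑ i ∈ Finset.range (v0 + 1), X2 i ω} := by
    intro v0 v1 h0 h1
    set c := d + ((v0 : ℝ) + (v1 : ℝ) - 1) / R with hcdef
    set T : Finset (ℕ ⊕ ℕ) :=
      (Finset.range (v1 + 1)).image Sum.inl ∪ (Finset.range (v0 + 1)).image Sum.inr with hTdef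
    set g : ℕ ⊕ ℕ → ℕ ⊕ ℕ := Sum.map (fun i => nh - v0 - i) (fun i => nh - i) with hgdef
    have hmemT : ∀ j : ℕ ⊕ ℕ, j ∈ T ↔
        (∃ i, i ≤ v1 ∧ j = Sum.inl i) ∨ (∃ i, i ≤ v0 ∧ j = Sum.inr i) := by
      rintro (i | i) <;>
        simp [hTdef, Finset.mem_union, Finset.mem_image, Nat.lt_succ_iff, eq_comm]
    have hinj : Set.InjOn g (T : Set (ℕ ⊕ ℕ)) := by
      rintro (x | x) hx (y | y) hy hxy
      · simp only [hgdef, Sum.map_inl, Sum.inl.injEq] at hxy ⊢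
        have hx' : x ≤ v1 := by
          rcases (hmemT (Sum.inl x)).mp hx with ⟨i, hi, hh⟩ | ⟨i, hi, hh⟩ <;> simp_all
        have hy' : y ≤ v1 := by
          rcases (hmemT (Sum.inl y)).mp hy with ⟨i, hi, hh⟩ | ⟨i, hi, hh⟩ <;> simp_all
        omega
      · simp [hgdef] at hxy
      · simp [hgdef] at hxy
      · simp only [hgdef, Sum.map_inr, Sum.inr.injEq] at hxy ⊢
        have hx' : x ≤ v0 := by
          rcases (hmemT (Sum.inr x)).mp hx with ⟨i, hi, hh⟩ | ⟨i, hi, hh⟩ <;> simp_all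
        have hy' : y ≤ v0 := by
          rcases (hmemT (Sum.inr y)).mp hy with ⟨i, hi, hh⟩ | ⟨i, hi, hh⟩ <;> simp_all
        omega
    have hid : ∀ j ∈ T, μ.map (Sum.elim X1 X2 (g j)) = μ.map (Sum.elim X1 X2 j) := by
      rintro (i | i) _
      · show μ.map (X1 (nh - v0 - i)) = μ.map (X1 i)
        rw [hident1 (nh - v0 - i), hident1 i]
      · show μ.map (X2 (nh - i)) = μ.map (X2 i)
        rw [hident2 (nh - i), hident2 i]
    have hmapeq := map_sum_congr_of_iIndepFun hindep hYmeas g T hinj hid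
    have hfun1 : (fun ω => ∑ j ∈ T, Sum.elim X1 X2 (g j) ω) = fun ω =>
        (∑ i ∈ Finset.range (v1 + 1), X1 (nh - v0 - i) ω) +
          ∑ i ∈ Finset.range (v0 + 1), X2 (nh - i) ω := by
      funext ω
      rw [hsumT v0 v1 (fun j => Sum.elim X1 X2 (g j)) ω]
      simp [hgdef]
    have hfun2 : (fun ω => ∑ j ∈ T, Sum.elim X1 X2 j ω) = fun ω =>
        (∑ i ∈ Finset.range (v1 + 1), X1 i ω) + ∑ i ∈ Finset.range (v0 + 1), X2 i ω := by
      funext ω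
      rw [hsumT v0 v1 (Sum.elim X1 X2) ω]
      simp
    rw [hfun1, hfun2] at hmapeq
    have m1 : Measurable (fun ω => (∑ i ∈ Finset.range (v1 + 1), X1 (nh - v0 - i) ω) +
        ∑ i ∈ Finset.range (v0 + 1), X2 (nh - i) ω) :=
      (Finset.measurable_sum _ (fun i _ => hmeas1 _)).add
        (Finset.measurable_sum _ (fun i _ => hmeas2 _))
    have m2 : Measurable (fun ω => (∑ i ∈ Finset.range (v1 + 1), X1 i ω) +
        ∑ i ∈ Finset.range (v0 + 1), X2 i ω) :=
      (Finset.measurable_sum _ (fun i _ => hmeas1 _)).add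
        (Finset.measurable_sum _ (fun i _ => hmeas2 _))
    calc μ {ω | c < (∑ i ∈ Finset.range (v1 + 1), X1 (nh - v0 - i) ω) +
            ∑ i ∈ Finset.range (v0 + 1), X2 (nh - i) ω}
        = μ.map (fun ω => (∑ i ∈ Finset.range (v1 + 1), X1 (nh - v0 - i) ω) +
            ∑ i ∈ Finset.range (v0 + 1), X2 (nh - i) ω) (Set.Ioi c) := by
          rw [Measure.map_apply m1 measurableSet_Ioi]; rfl
      _ = μ.map (fun ω => (∑ i ∈ Finset.range (v1 + 1), X1 i ω) +
            ∑ i ∈ Finset.range (v0 + 1), X2 i ω) (Set.Ioi c) := by rw [hmapeq]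
      _ = μ {ω | c < (∑ i ∈ Finset.range (v1 + 1), X1 i ω) +
            ∑ i ∈ Finset.range (v0 + 1), X2 i ω} := by
          rw [Measure.map_apply m2 measurableSet_Ioi]; rfl
  -- inclusion of the departure event into the union of per-(v0,v1) events
  have hincl : {ω | t < depart (depart (fun n _ => (n : ℝ) / R) X1) X2 nh ω} ⊆
      ⋃ v0 ∈ Finset.range (nh + 1), ⋃ v1 ∈ Finset.range (nh - v0 + 1),
        {ω | d + ((v0 : ℝ) + (v1 : ℝ) - 1) / R <
          (∑ i ∈ Finset.range (v1 + 1), X1 (nh - v0 - i) ω) +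
            ∑ i ∈ Finset.range (v0 + 1), X2 (nh - i) ω} := by
    intro ω hω
    simp only [Set.mem_setOf_eq, depart] at hω
    obtain ⟨v0, hv0mem, hv0⟩ := (Finset.lt_sup'_iff (H := _)).mp hω
    rw [← sub_lt_iff_lt_add] at hv0
    obtain ⟨v1, hv1mem, hv1⟩ := (Finset.lt_sup'_iff (H := _)).mp hv0
    have h0 : v0 ≤ nh := Nat.lt_succ_iff.mp (Finset.mem_range.mp hv0mem)
    have h1 : v1 ≤ nh - v0 := Nat.lt_succ_iff.mp (Finset.mem_range.mp hv1mem)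
    refine Set.mem_biUnion hv0mem (Set.mem_biUnion hv1mem ?_)
    show d + ((v0 : ℝ) + (v1 : ℝ) - 1) / R <
      (∑ i ∈ Finset.range (v1 + 1), X1 (nh - v0 - i) ω) +
        ∑ i ∈ Finset.range (v0 + 1), X2 (nh - i) ω
    have hceil : (nh : ℝ) < R * (t - d) + 1 := by
      rw [hnh]
      exact Nat.ceil_lt_add_one (by nlinarith)
    have hcast : ((nh - v0 - v1 : ℕ) : ℝ) = (nh : ℝ) - v0 - v1 := by
      have hle : v0 + v1 ≤ nh := by omega
      rw [Nat.sub_sub, Nat.cast_sub hle]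
      push_cast
      ring
    have hkey : ((nh - v0 - v1 : ℕ) : ℝ) / R < t - d + (1 - v0 - v1) / R := by
      rw [hcast]
      calc ((nh : ℝ) - v0 - v1) / R < (R * (t - d) + 1 - v0 - v1) / R := by
            have h' : (nh : ℝ) - v0 - v1 < R * (t - d) + 1 - v0 - v1 := by linarith
            exact (div_lt_div_iff_of_pos_right hR).mpr h'
        _ = t - d + (1 - v0 - v1) / R := by field_simp; ring
    have hneg : ((v0 : ℝ) + (v1 : ℝ) - 1) / R = -((1 - v0 - v1) / R) := by ring
    rw [hneg]
    linarith [hv1, hkey]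
  
  have hN1 : nh + 1 ≤ N := le_max_left _ _
  have hNK : K ≤ N := le_max_right _ _
  have h1β1 : (0 : ℝ) < 1 - β1 := by linarith
  have h1β2 : (0 : ℝ) < 1 - β2 := by linarith
  have hgeom : ∀ (β : ℝ), β < 1 → ∀ n : ℕ,
      ∑ i ∈ Finset.range n, β ^ i = (1 - β ^ n) / (1 - β) := by
    intro β hβ n
    rw [geom_sum_eq (ne_of_lt hβ) n]
    rw [div_eq_div_iff (sub_ne_zero.mpr (ne_of_lt hβ)) (sub_ne_zero.mpr (ne_of_gt hβ))]
    ring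
  have hprod : ∀ n : ℕ,
      ∑ p ∈ Finset.range n ×ˢ Finset.range n, β1 ^ p.2 * β2 ^ p.1 =
        (∑ i ∈ Finset.range n, β1 ^ i) * (∑ i ∈ Finset.range n, β2 ^ i) := by
    intro n
    rw [Finset.sum_product]
    simp_rw [← Finset.sum_mul]
    rw [← Finset.mul_sum]
  have hsub : (Finset.range K ×ˢ Finset.range K) ⊆ Finset.range N ×ˢ Finset.range N :=
    Finset.product_subset_product (Finset.range_subset_range.mpr hNK) (Finset.range_subset_range.mpr hNK)
  have htailR : ∑ p ∈ (Finset.range N ×ˢ Finset.range N) \ (Finset.range K ×ˢ Finset.range K),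
      C * (β1 ^ p.2 * β2 ^ p.1) ≤ C * φ := by
    rw [← Finset.mul_sum]
    refine mul_le_mul_of_nonneg_left ?_ hCnn
    rw [Finset.sum_sdiff_eq_sub hsub, hprod N, hprod K, hgeom β1 hβ1lt N, hgeom β2 hβ2lt N,
      hgeom β1 hβ1lt K, hgeom β2 hβ2lt K]
    have e1 : (1 - β1 ^ N) / (1 - β1) ≤ 1 / (1 - β1) :=
      (div_le_div_iff_of_pos_right h1β1).mpr (sub_le_self 1 (pow_nonneg hβ1nn N))
    have e2 : (1 - β2 ^ N) / (1 - β2) ≤ 1 / (1 - β2) :=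
      (div_le_div_iff_of_pos_right h1β2).mpr (sub_le_self 1 (pow_nonneg hβ2nn N))
    have e3 : (0 : ℝ) ≤ (1 - β2 ^ N) / (1 - β2) :=
      div_nonneg (sub_nonneg.mpr (pow_le_one₀ hβ2nn hβ2lt.le)) h1β2.le
    calc (1 - β1 ^ N) / (1 - β1) * ((1 - β2 ^ N) / (1 - β2)) -
            (1 - β1 ^ K) / (1 - β1) * ((1 - β2 ^ K) / (1 - β2))
        ≤ 1 / (1 - β1) * (1 / (1 - β2)) -
            (1 - β1 ^ K) / (1 - β1) * ((1 - β2 ^ K) / (1 - β2)) := by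
          apply sub_le_sub_right
          exact mul_le_mul e1 e2 e3 (one_div_nonneg.mpr h1β1.le)
      _ = φ := by
          rw [hφdef]
          field_simp
          ring
  calc μ {ω | t < depart (depart (fun n _ => (n : ℝ) / R) X1) X2 nh ω}
      ≤ ∑ v0 ∈ Finset.range (nh + 1), ∑ v1 ∈ Finset.range (nh - v0 + 1),
          μ {ω | d + ((v0 : ℝ) + (v1 : ℝ) - 1) / R <
            (∑ i ∈ Finset.range (v1 + 1), X1 (nh - v0 - i) ω) +
              ∑ i ∈ Finset.range (v0 + 1), X2 (nh - i) ω} := by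
        refine le_trans (measure_mono hincl) ?_
        refine le_trans (measure_biUnion_finset_le _ _) ?_
        exact Finset.sum_le_sum fun v0 _ => measure_biUnion_finset_le _ _
    _ = ∑ v0 ∈ Finset.range (nh + 1), ∑ v1 ∈ Finset.range (nh - v0 + 1),
          μ {ω | d + ((v0 : ℝ) + (v1 : ℝ) - 1) / R <
            (∑ i ∈ Finset.range (v1 + 1), X1 i ω) +
              ∑ i ∈ Finset.range (v0 + 1), X2 i ω} := by
        refine Finset.sum_congr rfl fun v0 hv0 => Finset.sum_congr rfl fun v1 hv1 => ?_
        exact hAB v0 v1 (Nat.lt_succ_iff.mp (Finset.mem_range.mp hv0))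
          (Nat.lt_succ_iff.mp (Finset.mem_range.mp hv1))
    _ ≤ ∑ v0 ∈ Finset.range N, ∑ v1 ∈ Finset.range N,
          μ {ω | d + ((v0 : ℝ) + (v1 : ℝ) - 1) / R <
            (∑ i ∈ Finset.range (v1 + 1), X1 i ω) +
              ∑ i ∈ Finset.range (v0 + 1), X2 i ω} := by
        refine le_trans (Finset.sum_le_sum fun v0 hv0 =>
          Finset.sum_le_sum_of_subset (Finset.range_subset_range.mpr
            (le_trans (by omega : nh - v0 + 1 ≤ nh + 1) hN1))) ?_
        exact Finset.sum_le_sum_of_subset (Finset.range_subset_range.mpr hN1)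
    _ = ∑ p ∈ Finset.range N ×ˢ Finset.range N,
          μ {ω | d + ((p.1 : ℝ) + (p.2 : ℝ) - 1) / R <
            (∑ i ∈ Finset.range (p.2 + 1), X1 i ω) +
              ∑ i ∈ Finset.range (p.1 + 1), X2 i ω} := by
        rw [Finset.sum_product]
    _ = (∑ p ∈ (Finset.range N ×ˢ Finset.range N) \ (Finset.range K ×ˢ Finset.range K),
          μ {ω | d + ((p.1 : ℝ) + (p.2 : ℝ) - 1) / R <
            (∑ i ∈ Finset.range (p.2 + 1), X1 i ω) +
              ∑ i ∈ Finset.range (p.1 + 1), X2 i ω}) +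
        ∑ p ∈ Finset.range K ×ˢ Finset.range K,
          μ {ω | d + ((p.1 : ℝ) + (p.2 : ℝ) - 1) / R <
            (∑ i ∈ Finset.range (p.2 + 1), X1 i ω) +
              ∑ i ∈ Finset.range (p.1 + 1), X2 i ω} := (Finset.sum_sdiff hsub).symm
    _ ≤ ENNReal.ofReal (C * φ) +
        ∑ p ∈ Finset.range K ×ˢ Finset.range K,
          μ {ω | d + ((p.1 : ℝ) + (p.2 : ℝ) - 1) / R <
            (∑ i ∈ Finset.range (p.2 + 1), X1 i ω) +
              ∑ i ∈ Finset.range (p.1 + 1), X2 i ω} := by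
        refine add_le_add_left ?_ _
        refine le_trans (Finset.sum_le_sum fun p _ => hchern p.1 p.2) ?_
        rw [← ENNReal.ofReal_sum_of_nonneg (fun p _ => mul_nonneg hCnn (mul_nonneg (pow_nonneg hβ1nn _) (pow_nonneg hβ2nn _)))]
        exact ENNReal.ofReal_le_ofReal htailR
    _ = (∑ v0 ∈ Finset.range K, ∑ v1 ∈ Finset.range K,
          μ {ω | d + ((v0 : ℝ) + (v1 : ℝ) - 1) / R <
            (∑ i ∈ Finset.range (v1 + 1), X1 i ω) +
              ∑ i ∈ Finset.range (v0 + 1), X2 i ω}) + ENNReal.ofReal (C * φ) := by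
        rw [add_comm, Finset.sum_product]
end

section
/- Fix N ≥ 1 and let (X_k^i) for k ∈ {1, …, N}, i ≥ 0 be nonnegative real random variables that are mutually independent and all identically distributed with common MGF M(s) = E[e^{s X_1^0}]. Let R > 0, d > 0, t ≥ d, n̂ = ⌈R(t-d)⌉, and define recursively D_1(n) = max_{0 ≤ v ≤ n} ( (n-v)/R + Σ_{i=0}^{v} X_1^{n-i} ) and, for 2 ≤ k ≤ N, D_k(n) = max_{0 ≤ v ≤ n} ( D_{k-1}(n-v) + Σ_{i=0}^{v} X_k^{n-i} ). Suppose s > 0 satisfies M(s) < ∞ and M(s) < e^{s/R}. Then P( D_N(n̂) > t ) ≤ e^{-s(d - 1/R)} · M(s)^N / ( 1 - M(s) e^{-s/R} )^N. -/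
open MeasureTheory ProbabilityTheory

/-- Departure times of an `N`-hop tandem of FCFS queues fed by a periodic source of rate `R`:
`departN R X 0 n ω = n/R` (the arrival process) and node `k+1` serves the departures of node
`k` with service times `X (k+1)`. -/
noncomputable def departN {Ω : Type*} (R : ℝ) (X : ℕ → ℕ → Ω → ℝ) : ℕ → ℕ → Ω → ℝ
  | 0 => fun n _ => (n : ℝ) / R
  | k + 1 => depart (departN R X k) (X (k + 1))

section Aux

lemma aux_geom {q : ℝ} (h0 : 0 ≤ q) (h1 : q < 1) (n : ℕ) :
    ∑ v ∈ Finset.range n, q ^ v ≤ (1 - q)⁻¹ := by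
  have h2 : (0:ℝ) < 1 - q := by linarith
  rw [geom_sum_eq (ne_of_lt h1) n]
  have h3 : (q ^ n - 1) / (q - 1) = (1 - q ^ n) / (1 - q) := by
    rw [div_eq_div_iff (by linarith) (by linarith)]; ring
  rw [h3]
  have h4 : (1 - q ^ n) ≤ 1 := by nlinarith [pow_nonneg h0 n]
  calc (1 - q ^ n) / (1 - q) ≤ 1 / (1 - q) := by gcongr
    _ = (1 - q)⁻¹ := one_div _

lemma departN_congr {Ω Ω' : Type*} (R : ℝ) (X : ℕ → ℕ → Ω → ℝ) (Y : ℕ → ℕ → Ω' → ℝ) (k : ℕ) :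
    ∀ (n : ℕ) (ω : Ω) (ω' : Ω'), (∀ j i, 1 ≤ j → j ≤ k → i ≤ n → X j i ω = Y j i ω') →
      departN R X k n ω = departN R Y k n ω' := by
  induction k with
  | zero => intro n ω ω' _; rfl
  | succ k ih =>
      intro n ω ω' h
      show depart (departN R X k) (X (k+1)) n ω = depart (departN R Y k) (Y (k+1)) n ω'
      unfold depart
      apply Finset.sup'_congr _ rfl
      intro v hv
      have hvn : v ≤ n := Nat.lt_succ_iff.mp (Finset.mem_range.mp hv)
      have h1 : departN R X k (n - v) ω = departN R Y k (n - v) ω' :=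
        ih (n - v) ω ω' (fun j i hj1 hjk hi =>
          h j i hj1 (hjk.trans (Nat.le_succ k)) (hi.trans (Nat.sub_le n v)))
      have h2 : ∑ i ∈ Finset.range (v + 1), X (k+1) (n - i) ω
          = ∑ i ∈ Finset.range (v + 1), Y (k+1) (n - i) ω' :=
        Finset.sum_congr rfl fun i _ =>
          h (k+1) (n - i) (Nat.le_add_left 1 k) le_rfl (Nat.sub_le n i)
      rw [h1, h2]

lemma measurable_departN {Ω : Type*} [MeasurableSpace Ω] (R : ℝ) (X : ℕ → ℕ → Ω → ℝ) (k : ℕ)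
    (h : ∀ j, 1 ≤ j → j ≤ k → ∀ i, Measurable (X j i)) (n : ℕ) :
    Measurable (departN R X k n) := by
  induction k generalizing n with
  | zero => exact measurable_const
  | succ k ih =>
      have heq : departN R X (k+1) n = (Finset.range (n+1)).sup'
          ⟨0, Finset.mem_range.mpr (Nat.succ_pos n)⟩
          (fun v => fun ω => departN R X k (n - v) ω
            + ∑ i ∈ Finset.range (v + 1), X (k+1) (n - i) ω) := by
        funext ω
        show depart (departN R X k) (X (k+1)) n ω = _
        exact (Finset.apply_sup'_eq_sup'_comp (s := Finset.range (n+1))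
          ⟨0, Finset.mem_range.mpr (Nat.succ_pos n)⟩
          (f := fun v ω => departN R X k (n - v) ω + ∑ i ∈ Finset.range (v + 1), X (k + 1) (n - i) ω)
          (fun x : Ω → ℝ => x ω) (fun _ _ => rfl)).symm
      rw [heq]
      apply Finset.measurable_sup'
      intro v _
      exact ((ih (fun j h1 h2 => h j h1 (h2.trans (Nat.le_succ k)))) (n - v)).add
        (Finset.measurable_sum _ (fun i _ => h (k+1) (Nat.le_add_left 1 k) le_rfl (n - i)))

noncomputable def coordVal {ι : Type*} [DecidableEq ι] (s : Finset ι) (p : ι) (y : ↥s → ℝ) : ℝ :=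
  if h : p ∈ s then y ⟨p, h⟩ else 0

lemma measurable_coordVal {ι : Type*} [DecidableEq ι] (s : Finset ι) (p : ι) :
    Measurable (coordVal s p) := by
  unfold coordVal
  split_ifs with h
  · exact measurable_pi_apply _
  · exact measurable_const

lemma coordVal_mem {ι : Type*} [DecidableEq ι] (s : Finset ι) (p : ι) (h : p ∈ s) (y : ↥s → ℝ) :
    coordVal s p y = y ⟨p, h⟩ := dif_pos h

lemma indep_comp_restrict {Ω ι : Type*} [MeasurableSpace Ω] {μ : Measure Ω}
    (f : ι → Ω → ℝ) (hf : ∀ i, Measurable (f i))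
    (h : iIndepFun f μ) (S T : Finset ι) (hST : Disjoint S T)
    {φ : (↥S → ℝ) → ℝ} {ψ : (↥T → ℝ) → ℝ} (hφ : Measurable φ) (hψ : Measurable ψ) :
    IndepFun (fun ω => φ (fun p => f (↑p) ω)) (fun ω => ψ (fun p => f (↑p) ω)) μ :=
  (h.indepFun_finset S T hST hf).comp hφ hψ

lemma departN_phi {N : ℕ} (R : ℝ) (k m : ℕ) (S : Finset (Fin N × ℕ))
    (hSk : ∀ j i, 1 ≤ j → j ≤ k → i ≤ m → ∃ h : j - 1 < N, ((⟨j - 1, h⟩ : Fin N), i) ∈ S) :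
    ∃ φ : (↥S → ℝ) → ℝ, Measurable φ ∧
      ∀ {Ω : Type*} (X : ℕ → ℕ → Ω → ℝ) (ω : Ω),
        φ (fun p => X (((p : Fin N × ℕ).1 : ℕ) + 1) (p : Fin N × ℕ).2 ω)
          = departN R X k m ω := by
  classical
  refine ⟨fun y => departN R
      (fun j i y' => if h : j - 1 < N then coordVal S (⟨j - 1, h⟩, i) y' else 0) k m y, ?_, ?_⟩
  · apply measurable_departN
    intro j _ _ i
    by_cases h : j - 1 < N
    · simpa only [dif_pos h] using measurable_coordVal S _
    · simpa only [dif_neg h] using measurable_const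
  · intro Ω X ω
    apply departN_congr
    intro j i hj1 hjk hi
    obtain ⟨h, hmem⟩ := hSk j i hj1 hjk hi
    rw [dif_pos h, coordVal_mem S _ hmem]
    show X ((j - 1) + 1) i ω = X j i ω
    congr 1
    omega

lemma sum_phi {N : ℕ} (kf : Fin N) (v n : ℕ) (T : Finset (Fin N × ℕ))
    (hT : ∀ i, i ≤ v → (kf, n - i) ∈ T) :
    ∃ ψ : (↥T → ℝ) → ℝ, Measurable ψ ∧
      ∀ {Ω : Type*} (X : ℕ → ℕ → Ω → ℝ) (ω : Ω),
        ψ (fun p => X (((p : Fin N × ℕ).1 : ℕ) + 1) (p : Fin N × ℕ).2 ω)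
          = ∑ i ∈ Finset.range (v + 1), X ((kf : ℕ) + 1) (n - i) ω := by
  classical
  refine ⟨fun y => ∑ i ∈ Finset.range (v + 1), coordVal T (kf, n - i) y,
    Finset.measurable_sum _ (fun i _ => measurable_coordVal T _), ?_⟩
  intro Ω X ω
  refine Finset.sum_congr rfl fun i hi => ?_
  rw [coordVal_mem T _ (hT i (Nat.lt_succ_iff.mp (Finset.mem_range.mp hi)))]

end Aux

/-- N-hop Chernoff upper bound: for an `N`-hop FCFS tandem with periodic arrivals of rate `R`
and i.i.d. service times with common MGF `M(s) < e^{s/R}`, the violation probability of the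
system departure instant of the tagged packet `n̂ = ⌈R(t-d)⌉` is at most
`Ψ_N(s,d,R) = e^{-s(d-1/R)} M(s)^N / (1 - M(s)e^{-s/R})^N`. -/
theorem stmt18 {Ω : Type*} [MeasurableSpace Ω] (μ : Measure Ω) [IsProbabilityMeasure μ]
    (N : ℕ) (hN : 1 ≤ N) (X : ℕ → ℕ → Ω → ℝ)
    (hmeas : ∀ k, 1 ≤ k → k ≤ N → ∀ i, Measurable (X k i))
    (hnn : ∀ k, 1 ≤ k → k ≤ N → ∀ i ω, 0 ≤ X k i ω)
    (hindep : iIndepFun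
      (fun p : Fin N × ℕ => X ((p.1 : ℕ) + 1) p.2) μ)
    (hident : ∀ k, 1 ≤ k → k ≤ N → ∀ i, μ.map (X k i) = μ.map (X 1 0))
    (R d t s : ℝ) (hR : 0 < R) (hd : 0 < d) (ht : d ≤ t) (hs : 0 < s)
    (hint : Integrable (fun ω => Real.exp (s * X 1 0 ω)) μ)
    (hlt : (∫ ω, Real.exp (s * X 1 0 ω) ∂μ) < Real.exp (s / R)) :
    μ {ω | t < departN R X N ⌈R * (t - d)⌉₊ ω} ≤
      ENNReal.ofReal (Real.exp (-s * (d - 1 / R)) *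
        (∫ ω, Real.exp (s * X 1 0 ω) ∂μ) ^ N /
        (1 - (∫ ω, Real.exp (s * X 1 0 ω) ∂μ) * Real.exp (-(s / R))) ^ N) := by
  classical
  set M := ∫ ω, Real.exp (s * X 1 0 ω) ∂μ with hMdef
  set q := M * Real.exp (-(s / R)) with hqdef
  have hfmeas : ∀ p : Fin N × ℕ, Measurable ((fun p : Fin N × ℕ => X ((p.1 : ℕ) + 1) p.2) p) :=
    fun p => hmeas _ (Nat.le_add_left 1 p.1) (Nat.succ_le_of_lt p.1.2) p.2
  have hM1 : 1 ≤ M := by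
    have h1 : ∀ ω, (1:ℝ) ≤ Real.exp (s * X 1 0 ω) := fun ω => by
      rw [← Real.exp_zero]
      exact Real.exp_le_exp.mpr (mul_nonneg hs.le (hnn 1 le_rfl hN 0 ω))
    calc (1:ℝ) = ∫ _ω, (1:ℝ) ∂μ := by simp
      _ ≤ M := integral_mono (integrable_const 1) hint h1
  have hM0 : (0:ℝ) < M := lt_of_lt_of_le one_pos hM1
  have hq0 : 0 ≤ q := mul_nonneg hM0.le (Real.exp_pos _).le
  have hq1 : q < 1 := by
    have h2 := (div_lt_one (Real.exp_pos (s / R))).mpr hlt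
    rwa [div_eq_mul_inv, ← Real.exp_neg] at h2
  have h1q : (0:ℝ) < 1 - q := by linarith
  have hg : Measurable fun x : ℝ => Real.exp (s * x) := (measurable_id.const_mul s).exp
  -- identical distribution: single-variable mgf values
  have hident' : ∀ k, 1 ≤ k → k ≤ N → ∀ i,
      Integrable (fun ω => Real.exp (s * X k i ω)) μ ∧
      ∫ ω, Real.exp (s * X k i ω) ∂μ = M := by
    intro k hk1 hkN i
    have hmk := hmeas k hk1 hkN i
    have hm10 := hmeas 1 le_rfl hN 0
    have e1 : Integrable (fun x : ℝ => Real.exp (s * x)) (μ.map (X 1 0)) := by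
      rw [integrable_map_measure hg.aestronglyMeasurable hm10.aemeasurable]
      exact hint
    have e2 : Integrable (fun x : ℝ => Real.exp (s * x)) (μ.map (X k i)) := by
      rw [hident k hk1 hkN i]; exact e1
    constructor
    · have := (integrable_map_measure hg.aestronglyMeasurable hmk.aemeasurable).mp e2
      exact this
    · calc ∫ ω, Real.exp (s * X k i ω) ∂μ
          = ∫ x, Real.exp (s * x) ∂(μ.map (X k i)) :=
            (integral_map hmk.aemeasurable hg.aestronglyMeasurable).symm
        _ = ∫ x, Real.exp (s * x) ∂(μ.map (X 1 0)) := by rw [hident k hk1 hkN i]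
        _ = M := integral_map hm10.aemeasurable hg.aestronglyMeasurable
  -- mgf of partial sums of service times at one hop
  have lemB : ∀ (kf : Fin N) (v n : ℕ), v ≤ n →
      Integrable (fun ω => Real.exp (s * ∑ i ∈ Finset.range (v+1), X ((kf:ℕ)+1) (n-i) ω)) μ ∧
      ∫ ω, Real.exp (s * ∑ i ∈ Finset.range (v+1), X ((kf:ℕ)+1) (n-i) ω) ∂μ = M ^ (v+1) := by
    intro kf v
    induction v with
    | zero =>
        intro n _
        simp only [zero_add, Finset.sum_range_one, Nat.sub_zero, pow_one]
        exact hident' ((kf:ℕ)+1) (Nat.le_add_left 1 kf) (Nat.succ_le_of_lt kf.2) n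
    | succ v ih =>
        intro n hv1n
        have hvn : v ≤ n := Nat.le_of_succ_le hv1n
        have hsplit : (fun ω => Real.exp (s * ∑ i ∈ Finset.range (v+1+1), X ((kf:ℕ)+1) (n-i) ω))
            = fun ω => Real.exp (s * ∑ i ∈ Finset.range (v+1), X ((kf:ℕ)+1) (n-i) ω)
              * Real.exp (s * X ((kf:ℕ)+1) (n-(v+1)) ω) := by
          funext ω; rw [Finset.sum_range_succ, mul_add, Real.exp_add]
        set S : Finset (Fin N × ℕ) := {kf} ×ˢ Finset.Icc (n - v) n with hS
        set T : Finset (Fin N × ℕ) := {(kf, n - (v+1))} with hT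
        have hdisj : Disjoint S T := by
          rw [Finset.disjoint_left]
          intro p hpS hpT
          rw [hT, Finset.mem_singleton] at hpT
          rw [hS, Finset.mem_product, Finset.mem_Icc] at hpS
          rw [hpT] at hpS
          omega
        have hSmem : ∀ i, i ≤ v → (kf, n - i) ∈ S := by
          intro i hi
          rw [hS, Finset.mem_product, Finset.mem_singleton, Finset.mem_Icc]
          exact ⟨rfl, Nat.sub_le_sub_left hi n, Nat.sub_le n i⟩
        have hTmem : ∀ i, i ≤ 0 → (kf, n - (v+1) - i) ∈ T := by
          intro i hi
          rw [hT, Finset.mem_singleton]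
          have : i = 0 := Nat.le_zero.mp hi
          subst this
          rw [Nat.sub_zero]
        obtain ⟨ψ₁, hψ₁m, hψ₁⟩ := sum_phi kf v n S hSmem
        obtain ⟨ψ₂, hψ₂m, hψ₂⟩ := sum_phi kf 0 (n - (v+1)) T hTmem
        have hInd0 : IndepFun (fun ω => ∑ i ∈ Finset.range (v+1), X ((kf:ℕ)+1) (n-i) ω)
            (fun ω => X ((kf:ℕ)+1) (n-(v+1)) ω) μ := by
          have h2 := indep_comp_restrict (fun p : Fin N × ℕ => X ((p.1 : ℕ) + 1) p.2)
            hfmeas hindep S T hdisj hψ₁m hψ₂m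
          have e1 : (fun ω => ψ₁ (fun p => X (((p : Fin N × ℕ).1 : ℕ) + 1)
              (p : Fin N × ℕ).2 ω)) = fun ω => ∑ i ∈ Finset.range (v+1), X ((kf:ℕ)+1) (n-i) ω :=
            funext fun ω => hψ₁ X ω
          have e2 : (fun ω => ψ₂ (fun p => X (((p : Fin N × ℕ).1 : ℕ) + 1)
              (p : Fin N × ℕ).2 ω)) = fun ω => X ((kf:ℕ)+1) (n-(v+1)) ω := by
            funext ω
            rw [hψ₂ X ω]
            simp [Finset.sum_range_one]
          rwa [e1, e2] at h2
        have hInd : IndepFun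
            (fun ω => Real.exp (s * ∑ i ∈ Finset.range (v+1), X ((kf:ℕ)+1) (n-i) ω))
            (fun ω => Real.exp (s * X ((kf:ℕ)+1) (n-(v+1)) ω)) μ := hInd0.comp hg hg
        have hint1 := ih n hvn
        have hint2 := hident' ((kf:ℕ)+1) (Nat.le_add_left 1 kf) (Nat.succ_le_of_lt kf.2) (n-(v+1))
        constructor
        · rw [hsplit]
          exact hInd.integrable_mul hint1.1 hint2.1
        · rw [hsplit]
          have hmul : ∫ ω, Real.exp (s * ∑ i ∈ Finset.range (v+1), X ((kf:ℕ)+1) (n-i) ω)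
              * Real.exp (s * X ((kf:ℕ)+1) (n-(v+1)) ω) ∂μ
              = (∫ ω, Real.exp (s * ∑ i ∈ Finset.range (v+1), X ((kf:ℕ)+1) (n-i) ω) ∂μ)
                * ∫ ω, Real.exp (s * X ((kf:ℕ)+1) (n-(v+1)) ω) ∂μ :=
            hInd.integral_fun_mul_eq_mul_integral hint1.1.aestronglyMeasurable hint2.1.aestronglyMeasurable
          rw [hmul, hint1.2, hint2.2, ← pow_succ]
  -- main induction over hops
  have key : ∀ k, k ≤ N → ∀ n : ℕ,
      Integrable (fun ω => Real.exp (s * departN R X k n ω)) μ ∧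
      ∫ ω, Real.exp (s * departN R X k n ω) ∂μ
        ≤ Real.exp (s * ((n:ℝ)/R)) * (M ^ k / (1-q)^k) := by
    intro k
    induction k with
    | zero =>
        intro _ n
        have hconst : (fun ω : Ω => Real.exp (s * departN R X 0 n ω))
            = fun _ => Real.exp (s * ((n:ℝ)/R)) := rfl
        constructor
        · rw [hconst]; exact integrable_const _
        · rw [hconst, integral_const, probReal_univ]
          simp
    | succ k ih =>
        intro hk1N n
        have hkN' : k < N := hk1N
        have hkN : k ≤ N := Nat.le_of_lt hkN'
        set kf : Fin N := ⟨k, hkN'⟩ with hkf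
        have hgprop : ∀ v ∈ Finset.range (n+1),
            Integrable (fun ω => Real.exp (s * departN R X k (n - v) ω)
              * Real.exp (s * ∑ i ∈ Finset.range (v+1), X (k+1) (n - i) ω)) μ ∧
            ∫ ω, Real.exp (s * departN R X k (n - v) ω)
              * Real.exp (s * ∑ i ∈ Finset.range (v+1), X (k+1) (n - i) ω) ∂μ
              ≤ Real.exp (s * ((n:ℝ)/R)) * (M^(k+1) / (1-q)^k) * q ^ v := by
          intro v hv
          have hvn : v ≤ n := Nat.lt_succ_iff.mp (Finset.mem_range.mp hv)
          set S : Finset (Fin N × ℕ) := (Finset.univ ×ˢ Finset.range (n - v + 1)).filter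
            (fun p : Fin N × ℕ => (p.1 : ℕ) < k) with hS
          set T : Finset (Fin N × ℕ) := {kf} ×ˢ Finset.range (n+1) with hT
          have hdisj : Disjoint S T := by
            rw [Finset.disjoint_left]
            intro p hpS hpT
            rw [hS, Finset.mem_filter] at hpS
            rw [hT, Finset.mem_product, Finset.mem_singleton] at hpT
            have h1 : (p.1 : ℕ) < k := hpS.2
            have h2 : (p.1 : ℕ) = k := by rw [hpT.1]
            omega
          have hSk : ∀ j i, 1 ≤ j → j ≤ k → i ≤ n - v →
              ∃ h : j - 1 < N, ((⟨j - 1, h⟩ : Fin N), i) ∈ S := by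
            intro j i hj1 hjk hi
            refine ⟨by omega, ?_⟩
            rw [hS, Finset.mem_filter, Finset.mem_product]
            refine ⟨⟨Finset.mem_univ _, Finset.mem_range.mpr (Nat.lt_succ_of_le hi)⟩, ?_⟩
            show j - 1 < k
            omega
          have hTmem : ∀ i, i ≤ v → (kf, n - i) ∈ T := by
            intro i _
            rw [hT, Finset.mem_product, Finset.mem_singleton]
            exact ⟨rfl, Finset.mem_range.mpr (Nat.lt_succ_of_le (Nat.sub_le n i))⟩
          obtain ⟨φ, hφm, hφeq⟩ := departN_phi (N := N) R k (n - v) S hSk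
          obtain ⟨ψ, hψm, hψeq⟩ := sum_phi kf v n T hTmem
          have hInd0 : IndepFun (fun ω => departN R X k (n - v) ω)
              (fun ω => ∑ i ∈ Finset.range (v+1), X (k+1) (n - i) ω) μ := by
            have h2 := indep_comp_restrict (fun p : Fin N × ℕ => X ((p.1 : ℕ) + 1) p.2)
              hfmeas hindep S T hdisj hφm hψm
            have e1 : (fun ω => φ (fun p => X (((p : Fin N × ℕ).1 : ℕ) + 1)
                (p : Fin N × ℕ).2 ω)) = fun ω => departN R X k (n - v) ω :=
              funext fun ω => hφeq X ω
            have e2 : (fun ω => ψ (fun p => X (((p : Fin N × ℕ).1 : ℕ) + 1)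
                (p : Fin N × ℕ).2 ω)) = fun ω => ∑ i ∈ Finset.range (v+1), X (k+1) (n - i) ω :=
              funext fun ω => hψeq X ω
            rwa [e1, e2] at h2
          have hInd : IndepFun (fun ω => Real.exp (s * departN R X k (n - v) ω))
              (fun ω => Real.exp (s * ∑ i ∈ Finset.range (v+1), X (k+1) (n - i) ω)) μ :=
            hInd0.comp hg hg
          have hint1 := ih hkN (n - v)
          have hint2 := lemB kf v n hvn
          constructor
          · exact hInd.integrable_mul hint1.1 hint2.1
          · have hmul : ∫ ω, Real.exp (s * departN R X k (n - v) ω)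
                * Real.exp (s * ∑ i ∈ Finset.range (v+1), X (k+1) (n - i) ω) ∂μ
                = (∫ ω, Real.exp (s * departN R X k (n - v) ω) ∂μ)
                  * ∫ ω, Real.exp (s * ∑ i ∈ Finset.range (v+1), X (k+1) (n - i) ω) ∂μ :=
              hInd.integral_fun_mul_eq_mul_integral hint1.1.aestronglyMeasurable hint2.1.aestronglyMeasurable
            rw [hmul]
            have h2 : ∫ ω, Real.exp (s * ∑ i ∈ Finset.range (v+1), X (k+1) (n - i) ω) ∂μ
                = M ^ (v+1) := hint2.2
            rw [h2]
            have hcast : ((n - v : ℕ) : ℝ) = (n:ℝ) - (v:ℝ) := by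
              rw [Nat.cast_sub hvn]
            calc (∫ ω, Real.exp (s * departN R X k (n - v) ω) ∂μ) * M ^ (v+1)
                ≤ (Real.exp (s * (((n - v : ℕ):ℝ)/R)) * (M^k/(1-q)^k)) * M^(v+1) :=
                  mul_le_mul_of_nonneg_right hint1.2 (pow_nonneg hM0.le _)
              _ = Real.exp (s * ((n:ℝ)/R)) * (M^(k+1)/(1-q)^k) * q^v := by
                  rw [hcast]
                  have hexp : Real.exp (s * (((n:ℝ) - (v:ℝ))/R))
                      = Real.exp (s * ((n:ℝ)/R)) * Real.exp (-(s/R)) ^ v := by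
                    rw [← Real.exp_nat_mul, ← Real.exp_add]
                    congr 1
                    field_simp
                    ring
                  rw [hexp, hqdef, mul_pow]
                  ring
        have hpt : ∀ ω, Real.exp (s * departN R X (k+1) n ω)
            ≤ ∑ v ∈ Finset.range (n+1), Real.exp (s * departN R X k (n - v) ω)
              * Real.exp (s * ∑ i ∈ Finset.range (v+1), X (k+1) (n - i) ω) := by
          intro ω
          obtain ⟨v₀, hv₀mem, hv₀⟩ := Finset.exists_mem_eq_sup'
            (⟨0, Finset.mem_range.mpr (Nat.succ_pos n)⟩ : (Finset.range (n+1)).Nonempty)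
            (fun v => departN R X k (n - v) ω + ∑ i ∈ Finset.range (v+1), X (k+1) (n - i) ω)
          have hD : departN R X (k+1) n ω
              = departN R X k (n - v₀) ω + ∑ i ∈ Finset.range (v₀+1), X (k+1) (n - i) ω := hv₀
          rw [hD, mul_add, Real.exp_add]
          exact Finset.single_le_sum
            (f := fun v => Real.exp (s * departN R X k (n - v) ω)
              * Real.exp (s * ∑ i ∈ Finset.range (v+1), X (k+1) (n - i) ω))
            (fun v _ => mul_nonneg (Real.exp_pos _).le (Real.exp_pos _).le) hv₀mem
        have hintSum : Integrable (fun ω => ∑ v ∈ Finset.range (n+1),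
            Real.exp (s * departN R X k (n - v) ω)
              * Real.exp (s * ∑ i ∈ Finset.range (v+1), X (k+1) (n - i) ω)) μ :=
          integrable_finset_sum _ (fun v hv => (hgprop v hv).1)
        have hmeasD : Measurable (fun ω => Real.exp (s * departN R X (k+1) n ω)) :=
          ((measurable_departN R X (k+1)
            (fun j hj1 hjk i => hmeas j hj1 (hjk.trans hk1N) i) n).const_mul s).exp
        have hintD : Integrable (fun ω => Real.exp (s * departN R X (k+1) n ω)) μ :=
          hintSum.mono' hmeasD.aestronglyMeasurable (Filter.Eventually.of_forall fun ω => by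
            rw [Real.norm_eq_abs, abs_of_nonneg (Real.exp_pos _).le]
            exact hpt ω)
        refine ⟨hintD, ?_⟩
        calc ∫ ω, Real.exp (s * departN R X (k+1) n ω) ∂μ
            ≤ ∫ ω, ∑ v ∈ Finset.range (n+1), Real.exp (s * departN R X k (n - v) ω)
              * Real.exp (s * ∑ i ∈ Finset.range (v+1), X (k+1) (n - i) ω) ∂μ :=
              integral_mono hintD hintSum hpt
          _ = ∑ v ∈ Finset.range (n+1), ∫ ω, Real.exp (s * departN R X k (n - v) ω)
              * Real.exp (s * ∑ i ∈ Finset.range (v+1), X (k+1) (n - i) ω) ∂μ :=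
              integral_finset_sum _ (fun v hv => (hgprop v hv).1)
          _ ≤ ∑ v ∈ Finset.range (n+1), Real.exp (s * ((n:ℝ)/R)) * (M^(k+1)/(1-q)^k) * q^v :=
              Finset.sum_le_sum (fun v hv => (hgprop v hv).2)
          _ = Real.exp (s * ((n:ℝ)/R)) * (M^(k+1)/(1-q)^k) * ∑ v ∈ Finset.range (n+1), q^v := by
              rw [← Finset.mul_sum]
          _ ≤ Real.exp (s * ((n:ℝ)/R)) * (M^(k+1)/(1-q)^k) * (1-q)⁻¹ :=
              mul_le_mul_of_nonneg_left (aux_geom hq0 hq1 (n+1)) (by positivity)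
          _ = Real.exp (s * ((n:ℝ)/R)) * (M^(k+1)/(1-q)^(k+1)) := by
              have hne : (1-q) ≠ 0 := h1q.ne'
              rw [pow_succ]
              field_simp
              ring
  -- conclusion: Chernoff/Markov bound on the tagged packet
  set nh : ℕ := ⌈R * (t - d)⌉₊ with hnh
  obtain ⟨intN, bndN⟩ := key N le_rfl nh
  have markov : (μ {ω | t ≤ departN R X N nh ω}).toReal
      ≤ Real.exp (-s * t) * ∫ ω, Real.exp (s * departN R X N nh ω) ∂μ :=
    measure_ge_le_exp_mul_mgf t hs.le intN
  have hceil : (nh : ℝ) < R * (t - d) + 1 := by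
    rw [hnh]
    exact Nat.ceil_lt_add_one (by nlinarith)
  have hexp2 : Real.exp (-s * t) * Real.exp (s * ((nh:ℝ)/R)) ≤ Real.exp (-s * (d - 1/R)) := by
    rw [← Real.exp_add]
    apply Real.exp_le_exp.mpr
    have h2 : (nh:ℝ)/R ≤ t - d + 1/R := by
      rw [div_le_iff₀ hR]
      have h1R : (1/R)*R = 1 := by field_simp
      nlinarith
    nlinarith [mul_le_mul_of_nonneg_left h2 hs.le]
  have hfinal : Real.exp (-s * t) * ∫ ω, Real.exp (s * departN R X N nh ω) ∂μ
      ≤ Real.exp (-s * (d - 1/R)) * M ^ N / (1 - q) ^ N := by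
    calc Real.exp (-s * t) * ∫ ω, Real.exp (s * departN R X N nh ω) ∂μ
        ≤ Real.exp (-s * t) * (Real.exp (s * ((nh:ℝ)/R)) * (M^N/(1-q)^N)) :=
          mul_le_mul_of_nonneg_left bndN (Real.exp_pos _).le
      _ = (Real.exp (-s * t) * Real.exp (s * ((nh:ℝ)/R))) * (M^N/(1-q)^N) := by ring
      _ ≤ Real.exp (-s * (d - 1/R)) * (M^N/(1-q)^N) :=
          mul_le_mul_of_nonneg_right hexp2 (by positivity)
      _ = Real.exp (-s * (d - 1/R)) * M ^ N / (1 - q) ^ N := by ring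
  calc μ {ω | t < departN R X N nh ω}
      ≤ μ {ω | t ≤ departN R X N nh ω} :=
        measure_mono (Set.setOf_subset_setOf.mpr (fun ω h => le_of_lt h))
    _ = ENNReal.ofReal ((μ {ω | t ≤ departN R X N nh ω}).toReal) :=
        (ENNReal.ofReal_toReal (measure_ne_top μ _)).symm
    _ ≤ ENNReal.ofReal (Real.exp (-s * t) * ∫ ω, Real.exp (s * departN R X N nh ω) ∂μ) :=
        ENNReal.ofReal_le_ofReal markov
    _ ≤ ENNReal.ofReal (Real.exp (-s * (d - 1/R)) * M ^ N / (1 - q) ^ N) :=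
        ENNReal.ofReal_le_ofReal hfinal
end
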